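/- arXiv:1411.7801 — 4 statements merged into one kernel-verified Lean document; each statement's English description precedes it below -/
import Mathlib

section
/- Assume the block setup and QR setup, and suppose rank H_j = (j−1)L + r with 1 ≤ r ≤ L. Write H_j = [H̄_{j−1}, L_j], where L_j ∈ ℂ^{jL×L} consists of the last L columns of H_j. Then there exist Ŷ₁ ∈ ℂ^{(j−1)L×L}, an upper triangular Ŷ₂ ∈ ℂ^{r×L} of rank r, a matrix G_j ∈ ℂ^{jL×r} with orthonormal columns satisfying G_jᴴ H̄_{j−1} = 0, and a matrix M̂_j ∈ ℂ^{L×r} with orthonormal columns, such that L_j = H̄_{j−1} Ŷ₁ + G_j Ŷ₂, Z_j = R_{j−1} Ŷ₁, and Ĥ_{jj} = M̂_j Ŷ₂; in particular Ĥ_{jj} has rank r. -/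
open Matrix

noncomputable section

set_option maxHeartbeats 1000000

/-- Squared Frobenius norm of a complex matrix. -/
def frobSq {a b : Type*} [Fintype a] [Fintype b] (M : Matrix a b ℂ) : ℝ :=
  ∑ r, ∑ c, Complex.normSq (M r c)

/-- The four Moore–Penrose conditions. -/
def IsMoorePenrose {a b : Type*} [Fintype a] [Fintype b]
    (M : Matrix a b ℂ) (P : Matrix b a ℂ) : Prop :=
  M * P * M = M ∧ P * M * P = P ∧ (M * P)ᴴ = M * P ∧ (P * M)ᴴ = P * M

/-- The block Krylov subspace `𝕂_i(A, F)`: the span of all columns of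
`F, A F, …, A^(i-1) F`. -/
def blockKrylov {n L : ℕ} (A : Matrix (Fin n) (Fin n) ℂ)
    (F : Matrix (Fin n) (Fin L) ℂ) (i : ℕ) : Submodule ℂ (Fin n → ℂ) :=
  Submodule.span ℂ { v | ∃ k < i, ∃ c : Fin L, v = fun r => (A ^ k * F) r c }

/-- `E_L^{[mL]}` : the first `L` columns of the `mL × mL` identity matrix
(block row indexing). -/
def EL (m L : ℕ) : Matrix (Fin m × Fin L) (Fin L) ℂ :=
  Matrix.of fun r c => if (r.1 : ℕ) = 0 ∧ r.2 = c then 1 else 0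

/-- An `L × L` matrix is upper triangular. -/
def utL {L : ℕ} (M : Matrix (Fin L) (Fin L) ℂ) : Prop :=
  ∀ a b : Fin L, (b : ℕ) < (a : ℕ) → M a b = 0

/-- A block-indexed `mL × mL` matrix is upper triangular. -/
def utBig {m L : ℕ} (M : Matrix (Fin m × Fin L) (Fin m × Fin L) ℂ) : Prop :=
  ∀ r c : Fin m × Fin L, (c.1 : ℕ) * L + (c.2 : ℕ) < (r.1 : ℕ) * L + (r.2 : ℕ) → M r c = 0

/-- Stack a block-tall matrix on top of an extra block row. -/
def vcat {m L : ℕ} {col : Type*} (T : Matrix (Fin m × Fin L) col ℂ)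
    (Bo : Matrix (Fin L) col ℂ) : Matrix (Fin (m+1) × Fin L) col ℂ :=
  Matrix.of fun r cc => if h : (r.1 : ℕ) < m then T (⟨r.1, h⟩, r.2) cc else Bo r.2 cc

/-- The block matrix `[[R, Z], [0, N]]`. -/
def twoBlock {m L : ℕ} (R : Matrix (Fin m × Fin L) (Fin m × Fin L) ℂ)
    (Z : Matrix (Fin m × Fin L) (Fin L) ℂ) (N : Matrix (Fin L) (Fin L) ℂ) :
    Matrix (Fin (m+1) × Fin L) (Fin (m+1) × Fin L) ℂ :=
  Matrix.of fun r c =>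
    if hr : (r.1 : ℕ) < m then
      if hc : (c.1 : ℕ) < m then R (⟨r.1, hr⟩, r.2) (⟨c.1, hc⟩, c.2)
      else Z (⟨r.1, hr⟩, r.2) c.2
    else
      if (c.1 : ℕ) < m then 0 else N r.2 c.2

/-- The block matrix `[[R, Z], [0, Hmid], [0, Hbot]]`. -/
def threeBlock {m L : ℕ} (R : Matrix (Fin m × Fin L) (Fin m × Fin L) ℂ)
    (Z : Matrix (Fin m × Fin L) (Fin L) ℂ) (Hmid Hbot : Matrix (Fin L) (Fin L) ℂ) :
    Matrix (Fin (m+2) × Fin L) (Fin (m+1) × Fin L) ℂ :=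
  Matrix.of fun r c =>
    if hr : (r.1 : ℕ) < m then
      if hc : (c.1 : ℕ) < m then R (⟨r.1, hr⟩, r.2) (⟨c.1, hc⟩, c.2)
      else Z (⟨r.1, hr⟩, r.2) c.2
    else
      if (c.1 : ℕ) < m then 0
      else if (r.1 : ℕ) = m then Hmid r.2 c.2 else Hbot r.2 c.2

/-- `diag(Q, I_L)` : extend a block-indexed square matrix by an identity block. -/
def extendOne {m L : ℕ} (Q : Matrix (Fin m × Fin L) (Fin m × Fin L) ℂ) :
    Matrix (Fin (m+1) × Fin L) (Fin (m+1) × Fin L) ℂ :=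
  Matrix.of fun r c =>
    if hr : (r.1 : ℕ) < m then
      if hc : (c.1 : ℕ) < m then Q (⟨r.1, hr⟩, r.2) (⟨c.1, hc⟩, c.2) else 0
    else
      if (c.1 : ℕ) < m then 0 else if r.2 = c.2 then 1 else 0

/-- `diag(I_{mL}, Q)` : an identity block, then `Q` in the bottom right corner. -/
def extendBot {m L : ℕ} (Q : Matrix (Fin L) (Fin L) ℂ) :
    Matrix (Fin (m+1) × Fin L) (Fin (m+1) × Fin L) ℂ :=
  Matrix.of fun r c =>
    if (r.1 : ℕ) < m ∨ (c.1 : ℕ) < m then (if r = c then 1 else 0)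
    else Q r.2 c.2

/-- The `(m+2)L × (m+2)L` matrix which is the identity outside of its trailing
principal `2L × 2L` block, which is `[[Q11, Q12], [Q21, Q22]]`. -/
def trailingTwo {m L : ℕ} (Q11 Q12 Q21 Q22 : Matrix (Fin L) (Fin L) ℂ) :
    Matrix (Fin (m+2) × Fin L) (Fin (m+2) × Fin L) ℂ :=
  Matrix.of fun r c =>
    if (r.1 : ℕ) < m ∨ (c.1 : ℕ) < m then (if r = c then 1 else 0)
    else if (r.1 : ℕ) = m then
      (if (c.1 : ℕ) = m then Q11 r.2 c.2 else Q12 r.2 c.2)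
    else
      (if (c.1 : ℕ) = m then Q21 r.2 c.2 else Q22 r.2 c.2)

/-- The block matrix `[R ; 0]` (one extra zero block row below `R`). -/
def stackZero {m L : ℕ} (R : Matrix (Fin m × Fin L) (Fin m × Fin L) ℂ) :
    Matrix (Fin (m+1) × Fin L) (Fin m × Fin L) ℂ :=
  Matrix.of fun r c => if h : (r.1 : ℕ) < m then R (⟨r.1, h⟩, r.2) c else 0

/-- A breakdown-free block Arnoldi decomposition of length `j = p + 1` for the block
linear system `A X = B` with initial guess `X₀` (block size `L`). -/
structure BlockArnoldi (n L p : ℕ) : Type where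
  A : Matrix (Fin n) (Fin n) ℂ
  B : Matrix (Fin n) (Fin L) ℂ
  X0 : Matrix (Fin n) (Fin L) ℂ
  W : Matrix (Fin n) (Fin (p+2) × Fin L) ℂ
  S0 : Matrix (Fin L) (Fin L) ℂ
  Hbar : Matrix (Fin (p+2) × Fin L) (Fin (p+1) × Fin L) ℂ
  hL : 1 ≤ L
  hn : (p+2) * L ≤ n
  F0_rank : (B - A * X0).rank = L
  orth : Wᴴ * W = 1
  S0_ut : utL S0
  S0_inv : IsUnit S0
  F0_eq : B - A * X0 = (W.submatrix id fun c : Fin L => ((0 : Fin (p+2)), c)) * S0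
  span : ∀ i : ℕ, i ≤ p + 2 →
    blockKrylov A (B - A * X0) i =
      Submodule.span ℂ { v | ∃ c : Fin (p+2) × Fin L, (c.1 : ℕ) < i ∧ v = fun r => W r c }
  arnoldi : A * W.submatrix id (Prod.map Fin.castSucc id) = W * Hbar
  hess : ∀ r c, (c.1 : ℕ) + 1 < (r.1 : ℕ) → Hbar r c = 0
  sub_ut : ∀ (k : Fin (p+1)) (a b : Fin L), (b : ℕ) < (a : ℕ) → Hbar (k.succ, a) (k, b) = 0
  sub_inv : ∀ k : Fin (p+1), IsUnit (Matrix.of fun a b : Fin L => Hbar (k.succ, a) (k, b))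

namespace BlockArnoldi

variable {n L p : ℕ}

/-- `H̄_{j-1}`, the leading `jL × (j-1)L` submatrix of `H̄_j`. -/
def Hprev (D : BlockArnoldi n L p) : Matrix (Fin (p+1) × Fin L) (Fin p × Fin L) ℂ :=
  D.Hbar.submatrix (Prod.map Fin.castSucc id) (Prod.map Fin.castSucc id)

/-- `H_j`, the leading `jL × jL` submatrix of `H̄_j`. -/
def Hsq (D : BlockArnoldi n L p) : Matrix (Fin (p+1) × Fin L) (Fin (p+1) × Fin L) ℂ :=
  D.Hbar.submatrix (Prod.map Fin.castSucc id) id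

/-- `W_j = [V₁ … V_j]`. -/
def Wfull (D : BlockArnoldi n L p) : Matrix (Fin n) (Fin (p+1) × Fin L) ℂ :=
  D.W.submatrix id (Prod.map Fin.castSucc id)

/-- `W_{j-1} = [V₁ … V_{j-1}]`. -/
def Wprev (D : BlockArnoldi n L p) : Matrix (Fin n) (Fin p × Fin L) ℂ :=
  D.W.submatrix id (Prod.map (fun i : Fin p => (i.castSucc.castSucc : Fin (p+2))) id)

/-- `V_j`, the `j`-th block Arnoldi vector. -/
def Vj (D : BlockArnoldi n L p) : Matrix (Fin n) (Fin L) ℂ :=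
  D.W.submatrix id fun c : Fin L => (((Fin.last p).castSucc : Fin (p+2)), c)

end BlockArnoldi

/-- `Y` is the unique minimizer of `‖Hb • Y' - T‖_F` over all `Y'`. -/
def IsUniqueFrobMin {a b c : Type*} [Fintype a] [Fintype b] [Fintype c]
    (Hb : Matrix a b ℂ) (T : Matrix a c ℂ) (Y : Matrix b c ℂ) : Prop :=
  (∀ Y', frobSq (Hb * Y - T) ≤ frobSq (Hb * Y' - T)) ∧
  ∀ Y', (∀ Y'', frobSq (Hb * Y' - T) ≤ frobSq (Hb * Y'' - T)) → Y' = Y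

/-- `Y_j^{(G)}` is the solution of the `j`-th block GMRES least-squares subproblem. -/
def IsBlockGMRESj {n L p : ℕ} (D : BlockArnoldi n L p)
    (Y : Matrix (Fin (p+1) × Fin L) (Fin L) ℂ) : Prop :=
  IsUniqueFrobMin D.Hbar (EL (p+2) L * D.S0) Y

/-- `Y_{j-1}^{(G)}` is the solution of the `(j-1)`-st block GMRES least-squares
subproblem. -/
def IsBlockGMRESprev {n L p : ℕ} (D : BlockArnoldi n L p)
    (Y : Matrix (Fin p × Fin L) (Fin L) ℂ) : Prop :=
  IsUniqueFrobMin D.Hprev (EL (p+1) L * D.S0) Y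

/-- The QR setup at step `j = p+1` : a QR factorization `Q̄_{j-1} H̄_{j-1} = [R_{j-1}; 0]`
from the previous step, the induced splitting
`diag(Q̄_{j-1}, I_L)·H̄_j = [[R,Z],[0,Ĥ_{jj}],[0,H_{j+1,j}]]`, the unitary `Q_j`
(identity outside its trailing principal `2L×2L` block) completing the
QR factorization of `H̄_j`, and the unitary `Q̂_j^{(b)}` triangularizing `Ĥ_{jj}`. -/
structure QRSetup (L p : ℕ) (Hbar : Matrix (Fin (p+2) × Fin L) (Fin (p+1) × Fin L) ℂ)
    (S0 : Matrix (Fin L) (Fin L) ℂ) : Type where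
  Qbar : Matrix (Fin (p+1) × Fin L) (Fin (p+1) × Fin L) ℂ
  R : Matrix (Fin p × Fin L) (Fin p × Fin L) ℂ
  Z : Matrix (Fin p × Fin L) (Fin L) ℂ
  Hhat : Matrix (Fin L) (Fin L) ℂ
  Hsub : Matrix (Fin L) (Fin L) ℂ
  Q11 : Matrix (Fin L) (Fin L) ℂ
  Q12 : Matrix (Fin L) (Fin L) ℂ
  Q21 : Matrix (Fin L) (Fin L) ℂ
  Q22 : Matrix (Fin L) (Fin L) ℂ
  N : Matrix (Fin L) (Fin L) ℂ
  Qhatb : Matrix (Fin L) (Fin L) ℂ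
  Nhat : Matrix (Fin L) (Fin L) ℂ
  Qbar_unit : Qbarᴴ * Qbar = 1
  Qbar_base : p = 0 → Qbar = 1
  R_ut : utBig R
  R_inv : IsUnit R
  qr_prev : Qbar * Hbar.submatrix (Prod.map Fin.castSucc id) (Prod.map Fin.castSucc id)
      = stackZero R
  qr_split : extendOne Qbar * Hbar = threeBlock R Z Hhat Hsub
  Qj_unit : (trailingTwo (m := p) Q11 Q12 Q21 Q22)ᴴ * trailingTwo (m := p) Q11 Q12 Q21 Q22 = 1
  qr_full : trailingTwo (m := p) Q11 Q12 Q21 Q22 * (extendOne Qbar * Hbar)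
      = threeBlock R Z N 0
  N_ut : utL N
  N_inv : IsUnit N
  Qhatb_unit : Qhatbᴴ * Qhatb = 1
  Nhat_def : Nhat = Qhatb * Hhat
  Nhat_ut : utL Nhat

namespace QRSetup

variable {L p : ℕ} {Hbar : Matrix (Fin (p+2) × Fin L) (Fin (p+1) × Fin L) ℂ}
  {S0 : Matrix (Fin L) (Fin L) ℂ}

/-- `C̃_j` : the last `L` rows of `Q̄_{j-1} E_L^{[jL]} S₀`. -/
def Ct (S : QRSetup L p Hbar S0) : Matrix (Fin L) (Fin L) ℂ :=
  Matrix.of fun a b => (S.Qbar * (EL (p+1) L * S0)) ((Fin.last p), a) b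

/-- `C_j := Q_j^{(11)} C̃_j`. -/
def C (S : QRSetup L p Hbar S0) : Matrix (Fin L) (Fin L) ℂ := S.Q11 * S.Ct

/-- `Ĉ_j := Q̂_j^{(b)} C̃_j`. -/
def Chat (S : QRSetup L p Hbar S0) : Matrix (Fin L) (Fin L) ℂ := S.Qhatb * S.Ct

end QRSetup


/-! ### Auxiliary lemmas for `stmt7` -/

section Stmt7Aux

open Finset Submodule InnerProductSpace
open scoped InnerProductSpace

instance stmt7_auxWF (n : ℕ) : WellFoundedLT (Fin n) := inferInstance

theorem stmt7_inner_gs_self {L : ℕ} (f : Fin L → EuclideanSpace ℂ (Fin L)) (c : Fin L) :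
    ⟪gramSchmidt ℂ f c, f c⟫_ℂ = (‖gramSchmidt ℂ f c‖ : ℂ) ^ 2 := by
  conv_lhs => rw [gramSchmidt_def' ℂ f c]
  rw [inner_add_right, inner_sum]
  have hz : ∀ i ∈ Finset.Iio c,
      ⟪gramSchmidt ℂ f c, (ℂ ∙ gramSchmidt ℂ f i).starProjection (f c)⟫_ℂ = 0 := by
    intro i hi
    rw [starProjection_singleton, inner_smul_right,
      gramSchmidt_orthogonal ℂ f (Finset.mem_Iio.mp hi).ne', mul_zero]
  rw [Finset.sum_congr rfl hz, Finset.sum_const_zero, add_zero,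
    inner_self_eq_norm_sq_to_K]
  norm_cast

theorem stmt7_fin_le_strictMono {k L : ℕ} {f : Fin k → Fin L} (hf : StrictMono f) (a : Fin k) :
    (a : ℕ) ≤ (f a : ℕ) := by
  obtain ⟨i, hi⟩ := a
  induction i with
  | zero => exact Nat.zero_le _
  | succ m ih =>
    have h1 : m < k := Nat.lt_of_succ_lt hi
    have hlt : (f ⟨m, h1⟩ : ℕ) < (f ⟨m+1, hi⟩ : ℕ) := hf (by simp [Fin.mk_lt_mk])
    have hih : m ≤ (f ⟨m, h1⟩ : ℕ) := by simpa using ih h1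
    simpa using Nat.succ_le_of_lt (lt_of_le_of_lt hih hlt)

theorem stmt7_tri_fact {L : ℕ} (H : Matrix (Fin L) (Fin L) ℂ) :
    ∃ (k : ℕ) (Mh : Matrix (Fin L) (Fin k) ℂ) (Y : Matrix (Fin k) (Fin L) ℂ),
      Mhᴴ * Mh = 1 ∧ H = Mh * Y ∧
      (∀ (a : Fin k) (b : Fin L), (b : ℕ) < (a : ℕ) → Y a b = 0) ∧ H.rank = k := by
  classical
  set hcol : Fin L → EuclideanSpace ℂ (Fin L) := fun b => WithLp.toLp 2 (fun i => H i b) with hhcol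
  set g := gramSchmidtNormed ℂ hcol with hg
  set s : Finset (Fin L) := Finset.univ.filter (fun b => g b ≠ 0) with hs
  set σ : Fin s.card ↪o Fin L := s.orderEmbOfFin rfl with hσ
  set u : Fin s.card → EuclideanSpace ℂ (Fin L) := fun a => g (σ a) with hu
  have hmem : ∀ a, σ a ∈ s := fun a => s.orderEmbOfFin_mem rfl a
  have hune : ∀ a, u a ≠ 0 := by
    intro a
    exact (Finset.mem_filter.mp (hmem a)).2
  have hg_orth : ∀ i j : Fin L, i ≠ j → ⟪g i, g j⟫_ℂ = 0 := by
    intro i j hij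
    show ⟪gramSchmidtNormed ℂ hcol i, gramSchmidtNormed ℂ hcol j⟫_ℂ = 0
    simp [gramSchmidtNormed, inner_smul_left, inner_smul_right,
      gramSchmidt_orthogonal ℂ hcol hij]
  have hdelta : ∀ a a', ⟪u a, u a'⟫_ℂ = if a = a' then 1 else 0 := by
    intro a a'
    by_cases h : a = a'
    · subst h
      rw [if_pos rfl, @inner_self_eq_norm_sq_to_K ℂ,
        gramSchmidtNormed_unit_length' (hune a)]
      norm_num
    · rw [if_neg h]
      exact hg_orth _ _ fun hc => h (σ.injective hc)
  have hb_mem : ∀ b : Fin L, hcol b ∈ span ℂ (g '' Set.Iic b) := by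
    intro b
    rw [hg, span_gramSchmidtNormed, span_gramSchmidt_Iic]
    exact subset_span ⟨b, Set.self_mem_Iic, rfl⟩
  have horth : ∀ (a) (b : Fin L), b < σ a → ⟪u a, hcol b⟫_ℂ = 0 := by
    intro a b hb
    have key : ∀ x, x ∈ span ℂ (g '' Set.Iic b) → ⟪u a, x⟫_ℂ = 0 := by
      intro x hx
      induction hx using Submodule.span_induction with
      | mem x hx =>
        obtain ⟨c, hc, rfl⟩ := hx
        refine hg_orth _ _ fun h' => ?_
        rw [← h'] at hc
        exact absurd (lt_of_le_of_lt hc hb) (lt_irrefl _)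
      | zero => exact inner_zero_right _
      | add x y _ _ hx hy => rw [inner_add_right, hx, hy, add_zero]
      | smul c x _ hx => rw [inner_smul_right, hx, mul_zero]
    exact key _ (hb_mem b)
  have hspan : ∀ b : Fin L, hcol b ∈ span ℂ (Set.range u) := by
    intro b
    have h1 : hcol b ∈ span ℂ (Set.range hcol) := subset_span (Set.mem_range_self b)
    have h2 : span ℂ (Set.range hcol) = span ℂ (Set.range g) := by
      rw [hg, span_gramSchmidtNormed_range, span_gramSchmidt]
    rw [h2] at h1
    refine (span_le.mpr ?_) h1
    rintro x ⟨c, rfl⟩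
    by_cases hc : g c = 0
    · rw [hc]; exact zero_mem _
    · have hcs : c ∈ s := by rw [hs, Finset.mem_filter]; exact ⟨Finset.mem_univ c, hc⟩
      have : c ∈ Set.range σ := by
        rw [hσ]
        rw [Finset.range_orderEmbOfFin]
        exact_mod_cast hcs
      obtain ⟨a, ha⟩ := this
      rw [← ha]
      exact subset_span ⟨a, rfl⟩
  have hexp : ∀ b : Fin L, hcol b = ∑ a, ⟪u a, hcol b⟫_ℂ • u a := by
    intro b
    set w : EuclideanSpace ℂ (Fin L) := hcol b - ∑ a, ⟪u a, hcol b⟫_ℂ • u a with hw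
    have hw1 : ∀ a, ⟪u a, w⟫_ℂ = 0 := by
      intro a
      rw [hw, inner_sub_right, inner_sum]
      have hterm : ∀ a' ∈ Finset.univ, ⟪u a, ⟪u a', hcol b⟫_ℂ • u a'⟫_ℂ
          = if a' = a then ⟪u a, hcol b⟫_ℂ else 0 := by
        intro a' _
        rw [inner_smul_right, hdelta]
        by_cases h : a' = a
        · subst h; simp
        · rw [if_neg (fun hh => h hh.symm), if_neg h, mul_zero]
      rw [Finset.sum_congr rfl hterm, Finset.sum_ite_eq' Finset.univ a, if_pos (Finset.mem_univ a),
        sub_self]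
    have hw2 : w ∈ span ℂ (Set.range u) := by
      rw [hw]
      exact sub_mem (hspan b) (sum_mem fun a _ => smul_mem _ _ (subset_span ⟨a, rfl⟩))
    have hw0 : w = 0 := by
      obtain ⟨c, hc⟩ := (mem_span_range_iff_exists_fun ℂ).mp hw2
      have : ⟪w, w⟫_ℂ = 0 := by
        nth_rewrite 1 [← hc]
        rw [sum_inner]
        refine Finset.sum_eq_zero fun a _ => ?_
        rw [inner_smul_left, hw1, mul_zero]
      exact inner_self_eq_zero.mp this
    rw [hw] at hw0
    exact (sub_eq_zero.mp hw0)
  have hpiv : ∀ a, ⟪u a, hcol (σ a)⟫_ℂ ≠ 0 := by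
    intro a
    have hgsne : gramSchmidt ℂ hcol (σ a) ≠ 0 := by
      intro h0
      apply hune a
      show gramSchmidtNormed ℂ hcol (σ a) = 0
      rw [gramSchmidtNormed, h0, smul_zero]
    have hn : ((‖gramSchmidt ℂ hcol (σ a)‖ : ℝ) : ℂ) ≠ 0 :=
      RCLike.ofReal_ne_zero.mpr (norm_ne_zero_iff.mpr hgsne)
    show ⟪gramSchmidtNormed ℂ hcol (σ a), hcol (σ a)⟫_ℂ ≠ 0
    rw [gramSchmidtNormed, inner_smul_left, stmt7_inner_gs_self, map_inv₀, RCLike.conj_ofReal]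
    exact mul_ne_zero (inv_ne_zero hn) (pow_ne_zero 2 hn)
  -- now build the matrices
  set Mh : Matrix (Fin L) (Fin s.card) ℂ := Matrix.of (fun i a => u a i) with hMh
  set Y : Matrix (Fin s.card) (Fin L) ℂ := Matrix.of (fun a b => ⟪u a, hcol b⟫_ℂ) with hY
  refine ⟨s.card, Mh, Y, ?_, ?_, ?_, ?_⟩
  · funext a a'
    rw [Matrix.mul_apply, Matrix.one_apply]
    have : ∀ i, Mhᴴ a i * Mh i a'
        = (starRingEnd ℂ) (u a i) * u a' i := fun i => rfl
    rw [Finset.sum_congr rfl (fun i _ => this i)]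
    rw [← hdelta a a']
    rw [PiLp.inner_apply]
    simp [RCLike.inner_apply, mul_comm]
  · funext i b
    rw [Matrix.mul_apply]
    have h0 := congrArg (EuclideanSpace.proj (𝕜 := ℂ) i) (hexp b)
    rw [map_sum] at h0
    simp only [_root_.map_smul, smul_eq_mul, PiLp.proj_apply] at h0
    show H i b = _
    calc H i b = hcol b i := rfl
    _ = ∑ a, ⟪u a, hcol b⟫_ℂ * u a i := h0
    _ = ∑ a, Mh i a * Y a b := by
        refine Finset.sum_congr rfl fun a _ => ?_
        rw [hMh, hY, Matrix.of_apply, Matrix.of_apply, mul_comm]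
  · intro a b hba
    have hb2 : (b : ℕ) < (σ a : ℕ) :=
      lt_of_lt_of_le hba (stmt7_fin_le_strictMono σ.strictMono a)
    exact horth a b (Fin.lt_def.mpr hb2)
  · -- rank
    have hMM : Mhᴴ * Mh = 1 := by
      funext a a'
      rw [Matrix.mul_apply, Matrix.one_apply]
      have hterm : ∀ i, Mhᴴ a i * Mh i a'
          = (starRingEnd ℂ) (u a i) * u a' i := fun i => rfl
      rw [Finset.sum_congr rfl (fun i _ => hterm i), ← hdelta a a', PiLp.inner_apply]
      simp [RCLike.inner_apply, mul_comm]
    have hHMY : H = Mh * Y := by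
      funext i b
      rw [Matrix.mul_apply]
      have h0 := congrArg (EuclideanSpace.proj (𝕜 := ℂ) i) (hexp b)
      rw [map_sum] at h0
      simp only [_root_.map_smul, smul_eq_mul, PiLp.proj_apply] at h0
      calc H i b = hcol b i := rfl
      _ = ∑ a, ⟪u a, hcol b⟫_ℂ * u a i := h0
      _ = ∑ a, Mh i a * Y a b := by
          refine Finset.sum_congr rfl fun a _ => ?_
          rw [hMh, hY, Matrix.of_apply, Matrix.of_apply, mul_comm]
    have hYM : Y = Mhᴴ * H := by
      rw [hHMY, ← Matrix.mul_assoc, hMM, Matrix.one_mul]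
    have h1 : H.rank ≤ Y.rank := by
      rw [hHMY]; exact Matrix.rank_mul_le_right Mh Y
    have h2 : Y.rank ≤ H.rank := by
      conv_lhs => rw [hYM]
      exact Matrix.rank_mul_le_right Mhᴴ H
    -- rank of Y is s.card
    set S : Matrix (Fin s.card) (Fin s.card) ℂ := Y.submatrix id (fun a => σ a) with hS
    have hStri : S.BlockTriangular id := by
      intro a' a hlt
      show Y a' (σ a) = 0
      exact horth a' (σ a) (σ.strictMono hlt)
    have hSdiag : ∀ a, S a a ≠ 0 := fun a => hpiv a
    have hSdet : IsUnit S.det := by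
      rw [Matrix.det_of_upperTriangular hStri]
      exact isUnit_iff_ne_zero.mpr (Finset.prod_ne_zero_iff.mpr fun a _ => hSdiag a)
    have hSrank : S.rank = s.card := by
      rw [Matrix.rank_of_isUnit S ((Matrix.isUnit_iff_isUnit_det S).mpr hSdet)]
      simp
    have hSY : S = Y * Matrix.of (fun b a => if b = σ a then (1:ℂ) else 0) := by
      funext a' a
      rw [Matrix.mul_apply]
      show Y a' (σ a) = _
      rw [Finset.sum_congr rfl (fun b _ => by
        rw [Matrix.of_apply, mul_ite, mul_one, mul_zero] : ∀ b ∈ Finset.univ,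
          Y a' b * Matrix.of (fun b a => if b = σ a then (1:ℂ) else 0) b a
            = if b = σ a then Y a' b else 0)]
      rw [Finset.sum_ite_eq' Finset.univ (σ a) (fun b => Y a' b),
        if_pos (Finset.mem_univ _)]
    have hYrank : Y.rank = s.card := by
      refine le_antisymm ?_ ?_
      · have := Matrix.rank_le_card_height Y
        simpa using this
      · calc #s = S.rank := hSrank.symm
          _ ≤ Y.rank := by rw [hSY]; exact Matrix.rank_mul_le_left Y _
    omega


theorem stmt7_rank_fromBlocks_diag {m n : Type*} [Fintype m] [Fintype n] [DecidableEq m]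
    [DecidableEq n] (A : Matrix m m ℂ) (hA : IsUnit A) (D : Matrix n n ℂ) :
    (fromBlocks A 0 0 D).rank = Fintype.card m + D.rank := by
  classical
  set L1 : (m → ℂ) →ₗ[ℂ] (m ⊕ n → ℂ) :=
    { toFun := fun u => Sum.elim u 0
      map_add' := by intro u v; funext x; cases x <;> simp
      map_smul' := by intro c u; funext x; cases x <;> simp } with hL1
  set L2 : (n → ℂ) →ₗ[ℂ] (m ⊕ n → ℂ) :=
    { toFun := fun v => Sum.elim 0 v
      map_add' := by intro u v; funext x; cases x <;> simp
      map_smul' := by intro c u; funext x; cases x <;> simp } with hL2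
  have hL1i : Function.Injective L1 := by
    intro u v h; funext a; exact congrFun h (Sum.inl a)
  have hL2i : Function.Injective L2 := by
    intro u v h; funext a; exact congrFun h (Sum.inr a)
  have hmv : ∀ x : m ⊕ n → ℂ, (fromBlocks A 0 0 D).mulVec x
      = L1 (A.mulVec (x ∘ Sum.inl)) + L2 (D.mulVec (x ∘ Sum.inr)) := by
    intro x
    rw [fromBlocks_mulVec]
    funext y; cases y <;> simp [hL1, hL2, mulVec]
  have hrange : LinearMap.range (fromBlocks A 0 0 D).mulVecLin
      = LinearMap.range (L1.comp A.mulVecLin) ⊔ LinearMap.range (L2.comp D.mulVecLin) := by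
    apply le_antisymm
    · rintro _ ⟨x, rfl⟩
      rw [mulVecLin_apply, hmv]
      exact Submodule.add_mem_sup ⟨x ∘ Sum.inl, rfl⟩ ⟨x ∘ Sum.inr, rfl⟩
    · rw [sup_le_iff]
      constructor
      · rintro _ ⟨u, rfl⟩
        refine ⟨Sum.elim u 0, ?_⟩
        rw [mulVecLin_apply, hmv]
        simp
      · rintro _ ⟨v, rfl⟩
        refine ⟨Sum.elim 0 v, ?_⟩
        rw [mulVecLin_apply, hmv]
        simp
  have hinf : LinearMap.range (L1.comp A.mulVecLin) ⊓ LinearMap.range (L2.comp D.mulVecLin) = ⊥ := by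
    rw [eq_bot_iff]
    rintro x ⟨⟨u, hu⟩, ⟨v, hv⟩⟩
    have : x = 0 := by
      funext y; cases y with
      | inl a => rw [← hv]; simp [hL2]
      | inr b => rw [← hu]; simp [hL1]
    simp [this]
  have h1 : Module.finrank ℂ (LinearMap.range (L1.comp A.mulVecLin)) = Fintype.card m := by
    rw [LinearMap.finrank_range_of_inj]
    · exact Module.finrank_fintype_fun_eq_card ℂ
    · exact hL1i.comp (Matrix.mulVec_injective_iff_isUnit.mpr hA)
  have h2 : Module.finrank ℂ (LinearMap.range (L2.comp D.mulVecLin)) = D.rank := by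
    rw [LinearMap.range_comp]
    exact ((Submodule.equivMapOfInjective L2 hL2i (LinearMap.range D.mulVecLin)).finrank_eq).symm
  rw [Matrix.rank, hrange]
  have := Submodule.finrank_sup_add_finrank_inf_eq
    (LinearMap.range (L1.comp A.mulVecLin)) (LinearMap.range (L2.comp D.mulVecLin))
  rw [hinf] at this
  simp only [finrank_bot, add_zero] at this
  rw [this, h1, h2]

theorem stmt7_rank_fromBlocks_tri {m n : Type*} [Fintype m] [Fintype n] [DecidableEq m]
    [DecidableEq n] (A : Matrix m m ℂ) (hA : IsUnit A) (Z : Matrix m n ℂ) (D : Matrix n n ℂ) :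
    (fromBlocks A Z 0 D).rank = Fintype.card m + D.rank := by
  have hdet : IsUnit A.det := (Matrix.isUnit_iff_isUnit_det A).mp hA
  have hfac : fromBlocks A Z 0 D = fromBlocks A 0 0 D * fromBlocks 1 (A⁻¹ * Z) 0 1 := by
    rw [Matrix.fromBlocks_multiply]
    simp [Matrix.mul_nonsing_inv_cancel_left A Z hdet]
  have hdet2 : IsUnit (fromBlocks (1 : Matrix m m ℂ) (A⁻¹ * Z) 0 (1 : Matrix n n ℂ)).det := by
    rw [Matrix.det_fromBlocks_zero₂₁]
    simp
  rw [hfac, Matrix.rank_mul_eq_left_of_isUnit_det _ _ hdet2,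
    stmt7_rank_fromBlocks_diag A hA D]

/-- The canonical equivalence splitting `Fin (p+1) × Fin L` into the first `p` block
rows and the last block row. -/
def blockEquiv (p L : ℕ) : ((Fin p × Fin L) ⊕ (Fin L)) ≃ (Fin (p+1) × Fin L) where
  toFun := Sum.elim (fun x => (x.1.castSucc, x.2)) (fun a => (Fin.last p, a))
  invFun := fun rc => if h : (rc.1 : ℕ) < p then Sum.inl (⟨(rc.1 : ℕ), h⟩, rc.2) else Sum.inr rc.2
  left_inv := by
    rintro (⟨i, a⟩ | a)
    · simp [Fin.is_lt]
    · simp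
  right_inv := by
    rintro ⟨i, a⟩
    by_cases h : (i : ℕ) < p
    · simp only [Sum.elim_inl, dif_pos h]
      exact Prod.ext (by ext; simp) rfl
    · simp only [Sum.elim_inr, dif_neg h]
      refine Prod.ext ?_ rfl
      have : (i : ℕ) = p := by omega
      ext
      simp [Fin.last, this]

theorem twoBlock_submatrix {p L : ℕ} (R : Matrix (Fin p × Fin L) (Fin p × Fin L) ℂ)
    (Z : Matrix (Fin p × Fin L) (Fin L) ℂ) (N : Matrix (Fin L) (Fin L) ℂ) :
    (twoBlock R Z N).submatrix (blockEquiv p L) (blockEquiv p L) = fromBlocks R Z 0 N := by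
  funext x y
  cases x with
  | inl x =>
    cases y with
    | inl y => simp [twoBlock, blockEquiv, Fin.is_lt]
    | inr y => simp [twoBlock, blockEquiv, Fin.is_lt]
  | inr x =>
    cases y with
    | inl y => simp [twoBlock, blockEquiv, Fin.is_lt]
    | inr y => simp [twoBlock, blockEquiv]

theorem rank_twoBlock {p L : ℕ} (R : Matrix (Fin p × Fin L) (Fin p × Fin L) ℂ)
    (hR : IsUnit R) (Z : Matrix (Fin p × Fin L) (Fin L) ℂ) (N : Matrix (Fin L) (Fin L) ℂ) :
    (twoBlock R Z N).rank = p * L + N.rank := by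
  have h1 := Matrix.rank_submatrix (twoBlock R Z N) (blockEquiv p L) (blockEquiv p L)
  rw [twoBlock_submatrix] at h1
  rw [← h1, stmt7_rank_fromBlocks_tri R hR Z N]
  simp [Fintype.card_prod, mul_comm]

end Stmt7Aux

/-- If `rank H_j = (j-1)L + r` with `1 ≤ r ≤ L`, then the last `L`
columns `L_j` of `H_j` decompose as `L_j = H̄_{j-1} Ŷ₁ + G_j Ŷ₂` with `G_j` having
orthonormal columns orthogonal to the range of `H̄_{j-1}`, `Ŷ₂` upper triangular of
rank `r`, and moreover `Z_j = R_{j-1} Ŷ₁` and `Ĥ_{jj} = M̂_j Ŷ₂` with `M̂_j` having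
orthonormal columns; in particular `Ĥ_{jj}` has rank `r`. -/
theorem stmt7 {n L p : ℕ} (D : BlockArnoldi n L p) (S : QRSetup L p D.Hbar D.S0)
    (r : ℕ) (hr1 : 1 ≤ r) (hrL : r ≤ L)
    (hrank : D.Hsq.rank = p * L + r) :
    ∃ (Y1 : Matrix (Fin p × Fin L) (Fin L) ℂ) (Y2 : Matrix (Fin r) (Fin L) ℂ)
      (G : Matrix (Fin (p+1) × Fin L) (Fin r) ℂ) (Mh : Matrix (Fin L) (Fin r) ℂ),
      (∀ (a : Fin r) (b : Fin L), (b : ℕ) < (a : ℕ) → Y2 a b = 0) ∧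
      Y2.rank = r ∧
      Gᴴ * G = 1 ∧
      Gᴴ * D.Hprev = 0 ∧
      Mhᴴ * Mh = 1 ∧
      (Matrix.of fun (rr : Fin (p+1) × Fin L) (c : Fin L) => D.Hsq rr (Fin.last p, c))
        = D.Hprev * Y1 + G * Y2 ∧
      S.Z = S.R * Y1 ∧
      S.Hhat = Mh * Y2 ∧
      S.Hhat.rank = r := by
  classical
  -- unitary facts
  have hQH : S.Qbarᴴ * S.Qbar = 1 := S.Qbar_unit
  have hQQ : S.Qbar * S.Qbarᴴ = 1 := mul_eq_one_comm.mp S.Qbar_unit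
  have hQdet : IsUnit S.Qbar.det :=
    IsUnit.of_mul_eq_one _ (by rw [← Matrix.det_mul, hQQ, Matrix.det_one])
  -- the key identity : Qbar * Hsq = [[R, Z], [0, Hhat]]
  have key : S.Qbar * D.Hsq = twoBlock S.R S.Z S.Hhat := by
    funext x c
    obtain ⟨i, a⟩ := x
    have h1 := congrFun (congrFun S.qr_split (i.castSucc, a)) c
    rw [Matrix.mul_apply, Fintype.sum_prod_type, Fin.sum_univ_castSucc] at h1
    have e2 : ∀ b : Fin L,
        extendOne S.Qbar (i.castSucc, a) (Fin.last (p+1), b) * D.Hbar (Fin.last (p+1), b) c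
          = 0 := by
      intro b
      have : extendOne S.Qbar (i.castSucc, a) (Fin.last (p+1), b) = 0 := by
        simp [extendOne, Fin.is_lt, Fin.is_le]
      rw [this, zero_mul]
    rw [Finset.sum_congr rfl (fun b _ => e2 b), Finset.sum_const_zero, add_zero] at h1
    have e1 : ∀ (j : Fin (p+1)) (b : Fin L),
        extendOne S.Qbar (i.castSucc, a) (j.castSucc, b) = S.Qbar (i, a) (j, b) := by
      intro j b
      simp [extendOne, Fin.is_lt, Fin.is_le]
    have h2 : ∑ j : Fin (p+1), ∑ b : Fin L,
        extendOne S.Qbar (i.castSucc, a) (j.castSucc, b) * D.Hbar (j.castSucc, b) c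
        = (S.Qbar * D.Hsq) (i, a) c := by
      rw [Matrix.mul_apply, Fintype.sum_prod_type]
      refine Finset.sum_congr rfl fun j _ => Finset.sum_congr rfl fun b _ => ?_
      rw [e1 j b]
      rfl
    rw [h2] at h1
    rw [h1]
    by_cases h : (i : ℕ) < p
    · simp [threeBlock, twoBlock, h]
    · have hip : (i : ℕ) = p := by omega
      simp [threeBlock, twoBlock, h, hip]
  have hHsq : D.Hsq = S.Qbarᴴ * twoBlock S.R S.Z S.Hhat := by
    rw [← key, ← Matrix.mul_assoc, hQH, Matrix.one_mul]
  -- rank of Hhat is r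
  have hrT := Matrix.rank_mul_eq_right_of_isUnit_det S.Qbar D.Hsq hQdet
  rw [key] at hrT
  rw [rank_twoBlock S.R S.R_inv S.Z S.Hhat] at hrT
  have hHr : S.Hhat.rank = r := by omega
  -- triangular factorization of Hhat
  obtain ⟨k, Mh0, Y0, hMM0, hHM0, htri0, hrk0⟩ := stmt7_tri_fact S.Hhat
  have hkr : r = k := by omega
  set ec : Fin r ≃ Fin k := finCongr hkr with hec
  set Mh : Matrix (Fin L) (Fin r) ℂ := Mh0.submatrix id ec with hMhdef
  set Y2 : Matrix (Fin r) (Fin L) ℂ := Y0.submatrix ec id with hY2def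
  have hMM : Mhᴴ * Mh = 1 := by
    have hh := Matrix.submatrix_mul_equiv Mh0ᴴ Mh0 (⇑ec) (Equiv.refl (Fin L)) (⇑ec)
    simp only [Equiv.coe_refl] at hh
    rw [hMhdef, Matrix.conjTranspose_submatrix, hh, hMM0, Matrix.submatrix_one_equiv]
  have hHM : S.Hhat = Mh * Y2 := by
    rw [hMhdef, hY2def, Matrix.submatrix_mul_equiv Mh0 Y0 id ec id,
      Matrix.submatrix_id_id, hHM0]
  have htri : ∀ (a : Fin r) (b : Fin L), (b : ℕ) < (a : ℕ) → Y2 a b = 0 := by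
    intro a b hba
    rw [hY2def]
    exact htri0 (ec a) b (by simpa [hec] using hba)
  -- Y2 has rank r
  have hY2M : Y2 = Mhᴴ * S.Hhat := by
    rw [hHM, ← Matrix.mul_assoc, hMM, Matrix.one_mul]
  have hY2rank : Y2.rank = r := by
    refine le_antisymm ?_ ?_
    · calc Y2.rank = (Mhᴴ * S.Hhat).rank := by rw [← hY2M]
        _ ≤ S.Hhat.rank := Matrix.rank_mul_le_right _ _
        _ = r := hHr
    · calc r = S.Hhat.rank := hHr.symm
        _ = (Mh * Y2).rank := by rw [← hHM]
        _ ≤ Y2.rank := Matrix.rank_mul_le_right _ _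
  -- Y1 and Z = R * Y1
  set Y1 : Matrix (Fin p × Fin L) (Fin L) ℂ := S.R⁻¹ * S.Z with hY1def
  have hRdet : IsUnit S.R.det := (Matrix.isUnit_iff_isUnit_det S.R).mp S.R_inv
  have hZ : S.Z = S.R * Y1 := by
    rw [hY1def, Matrix.mul_nonsing_inv_cancel_left S.R S.Z hRdet]
  -- the embedding of the last block row
  set Jm : Matrix (Fin (p+1) × Fin L) (Fin L) ℂ :=
    vcat (0 : Matrix (Fin p × Fin L) (Fin L) ℂ) (1 : Matrix (Fin L) (Fin L) ℂ) with hJm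
  have hJJ : Jmᴴ * Jm = 1 := by
    funext a b
    rw [Matrix.mul_apply, Fintype.sum_prod_type, Fin.sum_univ_castSucc]
    have hz : ∀ (j : Fin p) (x : Fin L),
        Jmᴴ a (j.castSucc, x) * Jm (j.castSucc, x) b = 0 := by
      intro j x
      have : Jm (j.castSucc, x) b = 0 := by simp [hJm, vcat, Fin.is_lt]
      rw [Matrix.conjTranspose_apply, this, mul_zero]
    rw [Finset.sum_congr rfl (fun j _ => Finset.sum_congr rfl (fun x _ => hz j x))]
    simp only [Finset.sum_const_zero, zero_add]
    have he2 : ∀ x : Fin L,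
        Jmᴴ a (Fin.last p, x) * Jm (Fin.last p, x) b
          = (starRingEnd ℂ) ((1 : Matrix (Fin L) (Fin L) ℂ) x a)
            * (1 : Matrix (Fin L) (Fin L) ℂ) x b := by
      intro x
      rw [Matrix.conjTranspose_apply]
      congr 1 <;> simp [hJm, vcat]
    rw [Finset.sum_congr rfl (fun x _ => he2 x)]
    simp [Matrix.one_apply, Finset.sum_ite_eq, eq_comm]
  have hJstack : Jmᴴ * stackZero S.R = 0 := by
    funext a c
    rw [Matrix.mul_apply]
    refine Finset.sum_eq_zero fun y _ => ?_
    by_cases h : (y.1 : ℕ) < p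
    · have : Jm y a = 0 := by simp [hJm, vcat, h]
      rw [Matrix.conjTranspose_apply, this, star_zero, zero_mul]
    · have : stackZero S.R y c = 0 := by simp [stackZero, h]
      rw [this, mul_zero]
  have hQbarHprev : S.Qbar * D.Hprev = stackZero S.R := S.qr_prev
  have hHprev : D.Hprev = S.Qbarᴴ * stackZero S.R := by
    rw [← hQbarHprev, ← Matrix.mul_assoc, hQH, Matrix.one_mul]
  set G : Matrix (Fin (p+1) × Fin L) (Fin r) ℂ := S.Qbarᴴ * Jm * Mh with hGdef
  have hGG : Gᴴ * G = 1 := by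
    rw [hGdef, Matrix.conjTranspose_mul, Matrix.conjTranspose_mul,
      Matrix.conjTranspose_conjTranspose]
    calc Mhᴴ * (Jmᴴ * S.Qbar) * (S.Qbarᴴ * Jm * Mh)
        = Mhᴴ * (Jmᴴ * (S.Qbar * (S.Qbarᴴ * (Jm * Mh)))) := by
          simp only [Matrix.mul_assoc]
      _ = Mhᴴ * (Jmᴴ * (Jm * Mh)) := by
          rw [← Matrix.mul_assoc S.Qbar, hQQ, Matrix.one_mul]
      _ = Mhᴴ * Mh := by rw [← Matrix.mul_assoc Jmᴴ, hJJ, Matrix.one_mul]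
      _ = 1 := hMM
  have hGH : Gᴴ * D.Hprev = 0 := by
    rw [hGdef, Matrix.conjTranspose_mul, Matrix.conjTranspose_mul,
      Matrix.conjTranspose_conjTranspose]
    calc Mhᴴ * (Jmᴴ * S.Qbar) * D.Hprev
        = Mhᴴ * (Jmᴴ * (S.Qbar * D.Hprev)) := by simp only [Matrix.mul_assoc]
      _ = Mhᴴ * (Jmᴴ * stackZero S.R) := by rw [hQbarHprev]
      _ = 0 := by rw [hJstack, Matrix.mul_zero]
  -- the L_j equation
  have hvcat : stackZero S.R * Y1 + Jm * S.Hhat = vcat S.Z S.Hhat := by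
    funext x c
    by_cases h : (x.1 : ℕ) < p
    · have h1 : (stackZero S.R * Y1) x c = (S.R * Y1) (⟨(x.1 : ℕ), h⟩, x.2) c := by
        rw [Matrix.mul_apply, Matrix.mul_apply]
        refine Finset.sum_congr rfl fun y _ => ?_
        congr 1
        simp [stackZero, h]
      have h2 : (Jm * S.Hhat) x c = 0 := by
        rw [Matrix.mul_apply]
        refine Finset.sum_eq_zero fun y _ => ?_
        have : Jm x y = 0 := by simp [hJm, vcat, h]
        rw [this, zero_mul]
      rw [Matrix.add_apply, h1, h2, add_zero, hZ]
      simp [vcat, h]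
    · have h1 : (stackZero S.R * Y1) x c = 0 := by
        rw [Matrix.mul_apply]
        refine Finset.sum_eq_zero fun y _ => ?_
        have : stackZero S.R x y = 0 := by simp [stackZero, h]
        rw [this, zero_mul]
      have h2 : (Jm * S.Hhat) x c = S.Hhat x.2 c := by
        calc (Jm * S.Hhat) x c
            = ∑ y, (1 : Matrix (Fin L) (Fin L) ℂ) x.2 y * S.Hhat y c := by
              rw [Matrix.mul_apply]
              refine Finset.sum_congr rfl fun y _ => ?_
              congr 1
              simp [hJm, vcat, h]
          _ = ((1 : Matrix (Fin L) (Fin L) ℂ) * S.Hhat) x.2 c := (Matrix.mul_apply).symm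
          _ = S.Hhat x.2 c := by rw [Matrix.one_mul]
      rw [Matrix.add_apply, h1, h2, zero_add]
      simp [vcat, h]
  have hLjQ : (Matrix.of fun (rr : Fin (p+1) × Fin L) (c : Fin L) => D.Hsq rr (Fin.last p, c))
      = S.Qbarᴴ * vcat S.Z S.Hhat := by
    funext x c
    rw [Matrix.of_apply]
    conv_lhs => rw [hHsq]
    rw [Matrix.mul_apply, Matrix.mul_apply]
    refine Finset.sum_congr rfl fun y _ => ?_
    congr 1
    by_cases h : (y.1 : ℕ) < p
    · simp [twoBlock, vcat, h]
    · simp [twoBlock, vcat, h]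
  have hLj : (Matrix.of fun (rr : Fin (p+1) × Fin L) (c : Fin L) => D.Hsq rr (Fin.last p, c))
      = D.Hprev * Y1 + G * Y2 := by
    rw [hLjQ, ← hvcat, Matrix.mul_add]
    congr 1
    · rw [hHprev, Matrix.mul_assoc]
    · rw [hGdef, hHM]
      simp only [Matrix.mul_assoc]
  exact ⟨Y1, Y2, G, Mh, htri, hY2rank, hGG, hGH, hMM, hLj, hZ, hHM, hHr⟩


end
end

section
/- Assume the block setup and QR setup, and suppose C̃_j is invertible (which holds when F_{j−1}^{(G)} has rank L). Then rank C_j = rank N̂_j. -/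
open Matrix

noncomputable section

set_option maxHeartbeats 1000000

open ComplexOrder in
private lemma aux_rank_conjTranspose {a b : Type*} [Fintype a] [Fintype b]
    (M : Matrix a b ℂ) : Mᴴ.rank = M.rank :=
  Matrix.rank_conjTranspose M

/-- If `C̃_j` is invertible (which holds when `F_{j-1}^(G)` has
rank `L`), then `rank C_j = rank N̂_j`. -/
theorem stmt9 {n L p : ℕ} (D : BlockArnoldi n L p) (S : QRSetup L p D.Hbar D.S0)
    (hCt : IsUnit S.Ct) :
    S.C.rank = S.Nhat.rank := by
  classical
  set T := trailingTwo (m := p) S.Q11 S.Q12 S.Q21 S.Q22 with hTdef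
  have hTunit : Tᴴ * T = 1 := S.Qj_unit
  have hM : T * threeBlock S.R S.Z S.Hhat S.Hsub = threeBlock S.R S.Z S.N 0 := by
    rw [← S.qr_split]; exact S.qr_full
  have hM2 : threeBlock S.R S.Z S.Hhat S.Hsub = Tᴴ * threeBlock S.R S.Z S.N 0 := by
    rw [← hM, ← Matrix.mul_assoc, hTunit, Matrix.one_mul]
  -- key: Hhat = Q11ᴴ * N
  have hHhat : S.Hhat = S.Q11ᴴ * S.N := by
    ext a b
    have h := congrArg (fun M => M ((⟨p, by omega⟩ : Fin (p+2)), a) (Fin.last p, b)) hM2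
    have hL : threeBlock S.R S.Z S.Hhat S.Hsub ((⟨p, by omega⟩ : Fin (p+2)), a)
        (Fin.last p, b) = S.Hhat a b := by
      simp [threeBlock, Fin.val_last]
    rw [hL] at h
    rw [h, Matrix.mul_apply, Matrix.mul_apply, Fintype.sum_prod_type]
    rw [Finset.sum_eq_single (⟨p, by omega⟩ : Fin (p+2))]
    · apply Finset.sum_congr rfl
      intro k2 _
      have hT : T ((⟨p, by omega⟩ : Fin (p+2)), k2) ((⟨p, by omega⟩ : Fin (p+2)), a)
          = S.Q11 k2 a := by
        simp [hTdef, trailingTwo]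
      have hB : threeBlock S.R S.Z S.N 0 ((⟨p, by omega⟩ : Fin (p+2)), k2)
          (Fin.last p, b) = S.N k2 b := by
        simp [threeBlock, Fin.val_last]
      rw [Matrix.conjTranspose_apply, hT, hB, Matrix.conjTranspose_apply]
    · intro k1 _ hk1
      apply Finset.sum_eq_zero
      intro k2 _
      rcases lt_or_ge (k1 : ℕ) p with hlt | hge
      · have hT : T (k1, k2) ((⟨p, by omega⟩ : Fin (p+2)), a) = 0 := by
          simp only [hTdef, trailingTwo, Matrix.of_apply]
          rw [if_pos (Or.inl hlt), if_neg]
          intro hc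
          rw [Prod.ext_iff] at hc
          have : (k1 : ℕ) = p := by
            simpa using congrArg Fin.val hc.1
          omega
        rw [Matrix.conjTranspose_apply, hT]
        simp
      · have hne : (k1 : ℕ) = p + 1 := by
          have : (k1 : ℕ) < p + 2 := k1.isLt
          have hkp : (k1 : ℕ) ≠ p := by
            intro hc; apply hk1; exact Fin.ext hc
          omega
        have hB : threeBlock S.R S.Z S.N 0 (k1, k2) (Fin.last p, b) = 0 := by
          simp only [threeBlock, Matrix.of_apply, Fin.val_last]
          rw [dif_neg (by omega), if_neg (by omega), if_neg (by omega)]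
          rfl
        rw [hB, mul_zero]
    · intro h; exact absurd (Finset.mem_univ _) h
  -- units
  have hN : IsUnit S.N.det := (Matrix.isUnit_iff_isUnit_det _).mp S.N_inv
  have hCt' : IsUnit S.Ct.det := (Matrix.isUnit_iff_isUnit_det _).mp hCt
  have hQhatb : IsUnit S.Qhatb.det := by
    have hdet := congrArg Matrix.det S.Qhatb_unit
    rw [Matrix.det_mul, Matrix.det_one] at hdet
    exact IsUnit.of_mul_eq_one _ (by rw [mul_comm]; exact hdet)
  calc S.C.rank = (S.Q11 * S.Ct).rank := rfl
    _ = S.Q11.rank := Matrix.rank_mul_eq_left_of_isUnit_det _ _ hCt'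
    _ = (S.Q11ᴴ).rank := (aux_rank_conjTranspose _).symm
    _ = (S.Q11ᴴ * S.N).rank := (Matrix.rank_mul_eq_left_of_isUnit_det _ _ hN).symm
    _ = S.Hhat.rank := by rw [← hHhat]
    _ = (S.Qhatb * S.Hhat).rank := (Matrix.rank_mul_eq_right_of_isUnit_det _ _ hQhatb).symm
    _ = S.Nhat.rank := by rw [← S.Nhat_def]


end
end

section
/- Assume the block setup and QR setup, and suppose F_{j−1}^{(G)} has rank L. Then H_j is singular with rank H_j = (j−1)L if and only if block GMRES totally stagnates at step j, i.e. X_j^{(G)} = X_{j−1}^{(G)}. -/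
open Matrix

noncomputable section

set_option maxHeartbeats 1000000

/-! ### Auxiliary lemmas -/

section Aux

open Matrix

variable {a b c d : Type*} [Fintype a] [Fintype b] [Fintype c] [Fintype d]

lemma frobSq_nonneg (M : Matrix a b ℂ) : 0 ≤ frobSq M :=
  Finset.sum_nonneg fun _ _ => Finset.sum_nonneg fun _ _ => Complex.normSq_nonneg _

lemma frobSq_zero : frobSq (0 : Matrix a b ℂ) = 0 := by simp [frobSq]

lemma frobSq_eq_re_trace (M : Matrix a b ℂ) : frobSq M = (Matrix.trace (Mᴴ * M)).re := by
  unfold frobSq Matrix.trace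
  rw [Complex.re_sum, Finset.sum_comm]
  refine Finset.sum_congr rfl fun cc _ => ?_
  simp only [Matrix.diag_apply, Matrix.mul_apply, Matrix.conjTranspose_apply, Complex.re_sum]
  refine Finset.sum_congr rfl fun r _ => ?_
  simp [Complex.normSq_apply, Complex.mul_re]

lemma frobSq_unitary_mul [DecidableEq a] (U : Matrix a a ℂ) (hU : Uᴴ * U = 1)
    (M : Matrix a b ℂ) : frobSq (U * M) = frobSq M := by
  rw [frobSq_eq_re_trace, frobSq_eq_re_trace]
  have h : (U * M)ᴴ * (U * M) = Mᴴ * (Uᴴ * U) * M := by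
    rw [Matrix.conjTranspose_mul]; simp only [Matrix.mul_assoc]
  rw [h, hU, Matrix.mul_one]

lemma frobSq_submatrix_row {a' : Type*} [Fintype a'] (e : a' ≃ a) (M : Matrix a b ℂ) :
    frobSq (M.submatrix e id) = frobSq M := by
  unfold frobSq
  exact Equiv.sum_comp e (fun r => ∑ cc, Complex.normSq (M r cc))

lemma frobSq_fromRows (A : Matrix a c ℂ) (B : Matrix b c ℂ) :
    frobSq (Matrix.fromRows A B) = frobSq A + frobSq B := by
  unfold frobSq
  rw [Fintype.sum_sum_type]
  simp

lemma fromRows_sub (A A' : Matrix a c ℂ) (B B' : Matrix b c ℂ) :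
    Matrix.fromRows A B - Matrix.fromRows A' B' = Matrix.fromRows (A - A') (B - B') := by
  ext (i | i) j <;> simp

lemma fromRows_add (A A' : Matrix a c ℂ) (B B' : Matrix b c ℂ) :
    Matrix.fromRows A B + Matrix.fromRows A' B' = Matrix.fromRows (A + A') (B + B') := by
  ext (i | i) j <;> simp

lemma fromColumns_add (A A' : Matrix c a ℂ) (B B' : Matrix c b ℂ) :
    Matrix.fromCols A B + Matrix.fromCols A' B' =
      Matrix.fromCols (A + A') (B + B') := by
  ext i (j | j) <;> simp

lemma min_aux {κ δ γ : Type*} [Fintype κ] [Fintype δ] [Fintype γ]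
    (Rm : Matrix κ κ ℂ) (T1 : Matrix κ γ ℂ) (T2 : Matrix δ γ ℂ)
    (Y0 Y : Matrix κ γ ℂ) (hY0 : Rm * Y0 = T1) :
    frobSq (Matrix.fromRows Rm (0 : Matrix δ κ ℂ) * Y0 - Matrix.fromRows T1 T2) ≤
      frobSq (Matrix.fromRows Rm (0 : Matrix δ κ ℂ) * Y - Matrix.fromRows T1 T2) := by
  have key : ∀ Y' : Matrix κ γ ℂ,
      Matrix.fromRows Rm (0 : Matrix δ κ ℂ) * Y' - Matrix.fromRows T1 T2 =
        Matrix.fromRows (Rm * Y' - T1) ((0 : Matrix δ κ ℂ) * Y' - T2) := fun Y' => by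
    rw [Matrix.fromRows_mul, fromRows_sub]
  rw [key, key, frobSq_fromRows, frobSq_fromRows, hY0, sub_self, frobSq_zero]
  simp only [Matrix.zero_mul]
  have := frobSq_nonneg (Rm * Y - T1)
  linarith

lemma unique_min_eq {m κ δ γ : Type*} [Fintype m] [Fintype κ] [Fintype δ] [Fintype γ]
    [DecidableEq κ] [DecidableEq m]
    (e : (κ ⊕ δ) ≃ m)
    (Hb : Matrix m κ ℂ) (T : Matrix m γ ℂ) (U : Matrix m m ℂ) (hU : Uᴴ * U = 1)
    (Rm : Matrix κ κ ℂ) (hRm : IsUnit Rm)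
    (hQR : (U * Hb).submatrix e id = Matrix.fromRows Rm 0)
    (Y : Matrix κ γ ℂ) (hY : IsUniqueFrobMin Hb T Y) :
    Rm * Y = (U * T).submatrix (fun k => e (Sum.inl k)) id := by
  set T1 : Matrix κ γ ℂ := (U * T).submatrix (fun k => e (Sum.inl k)) id with hT1
  set T2 : Matrix δ γ ℂ := (U * T).submatrix (fun k => e (Sum.inr k)) id with hT2
  have hUTsub : (U * T).submatrix e id = Matrix.fromRows T1 T2 := by
    ext (i | i) cc <;> simp [hT1, hT2]
  have hRmdet : IsUnit Rm.det := (Matrix.isUnit_iff_isUnit_det _).mp hRm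
  set Y0 : Matrix κ γ ℂ := Rm⁻¹ * T1 with hY0def
  have hY0 : Rm * Y0 = T1 := by
    rw [hY0def, ← Matrix.mul_assoc, Matrix.mul_nonsing_inv _ hRmdet, Matrix.one_mul]
  have eval : ∀ Y' : Matrix κ γ ℂ, frobSq (Hb * Y' - T) =
      frobSq (Matrix.fromRows Rm (0 : Matrix δ κ ℂ) * Y' - Matrix.fromRows T1 T2) := by
    intro Y'
    have h1 : frobSq (Hb * Y' - T) = frobSq (U * (Hb * Y' - T)) :=
      (frobSq_unitary_mul U hU _).symm
    have h2 : U * (Hb * Y' - T) = U * Hb * Y' - U * T := by rw [Matrix.mul_sub, ← Matrix.mul_assoc]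
    have h3 : frobSq (U * Hb * Y' - U * T) =
        frobSq ((U * Hb * Y' - U * T).submatrix e id) := (frobSq_submatrix_row e _).symm
    have h4 : (U * Hb * Y' - U * T).submatrix e id =
        (U * Hb).submatrix e id * Y' - (U * T).submatrix e id := by
      ext r cc
      simp [Matrix.sub_apply, Matrix.submatrix_apply, Matrix.mul_apply]
    rw [h1, h2, h3, h4, hQR, hUTsub]
  have hmin : ∀ Y'' : Matrix κ γ ℂ, frobSq (Hb * Y0 - T) ≤ frobSq (Hb * Y'' - T) := by
    intro Y''
    rw [eval, eval]
    exact min_aux Rm T1 T2 Y0 Y'' hY0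
  have hEq : Y0 = Y := hY.2 Y0 hmin
  rw [← hEq, hY0]

/-- The canonical equivalence splitting off the last block row. -/
def esp (m L : ℕ) : ((Fin m × Fin L) ⊕ Fin L) ≃ (Fin (m+1) × Fin L) where
  toFun x := Sum.elim (fun k => (Fin.castSucc k.1, k.2)) (fun a => (Fin.last m, a)) x
  invFun r := if h : (r.1 : ℕ) < m then Sum.inl (⟨r.1, h⟩, r.2) else Sum.inr r.2
  left_inv x := by
    rcases x with ⟨i, a⟩ | a
    · simp
    · simp [Fin.last]
  right_inv r := by
    by_cases h : (r.1 : ℕ) < m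
    · simp only [dif_pos h, Sum.elim_inl]
      exact Prod.ext (Fin.ext rfl) rfl
    · simp only [dif_neg h, Sum.elim_inr]
      refine Prod.ext (Fin.ext ?_) rfl
      have := r.1.isLt
      simp only [Fin.val_last]
      omega

lemma esp_symm_apply (m L : ℕ) (r : Fin (m+1) × Fin L) :
    (esp m L).symm r = if h : (r.1 : ℕ) < m then Sum.inl (⟨r.1, h⟩, r.2) else Sum.inr r.2 :=
  rfl

lemma esp_apply_inl (m L : ℕ) (k : Fin m × Fin L) :
    esp m L (Sum.inl k) = (Fin.castSucc k.1, k.2) := rfl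

lemma esp_apply_inr (m L : ℕ) (a : Fin L) : esp m L (Sum.inr a) = (Fin.last m, a) := rfl

lemma esp_symm_castSucc (m L : ℕ) (i : Fin m) (aa : Fin L) :
    (esp m L).symm (Fin.castSucc i, aa) = Sum.inl (i, aa) :=
  (Equiv.symm_apply_eq _).mpr rfl

lemma esp_symm_last (m L : ℕ) (aa : Fin L) :
    (esp m L).symm (Fin.last m, aa) = Sum.inr aa :=
  (Equiv.symm_apply_eq _).mpr rfl

/-- Lift a matrix with sum-type rows to block rows. -/
def liftR {m L : ℕ} {γ : Type*} (M : Matrix ((Fin m × Fin L) ⊕ Fin L) γ ℂ) :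
    Matrix (Fin (m+1) × Fin L) γ ℂ := M.submatrix (esp m L).symm id

/-- Lift a matrix with sum-type columns to block columns. -/
def liftC {m L : ℕ} {γ : Type*} (M : Matrix γ ((Fin m × Fin L) ⊕ Fin L) ℂ) :
    Matrix γ (Fin (m+1) × Fin L) ℂ := M.submatrix id (esp m L).symm

/-- Lift a square matrix with sum-type indices to block indices. -/
def liftS {m L : ℕ} (M : Matrix ((Fin m × Fin L) ⊕ Fin L) ((Fin m × Fin L) ⊕ Fin L) ℂ) :
    Matrix (Fin (m+1) × Fin L) (Fin (m+1) × Fin L) ℂ :=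
  M.submatrix (esp m L).symm (esp m L).symm

variable {m L : ℕ} {γ γ' : Type*} [Fintype γ] [Fintype γ']

lemma liftR_inj : Function.Injective (liftR (m := m) (L := L) (γ := γ)) := by
  intro M M' h
  have := congrArg (fun X => X.submatrix (esp m L) (id : γ → γ)) h
  simpa [liftR, Matrix.submatrix_submatrix, Function.comp] using this

lemma liftC_inj : Function.Injective (liftC (m := m) (L := L) (γ := γ)) := by
  intro M M' h
  have := congrArg (fun X => X.submatrix (id : γ → γ) (esp m L)) h
  simpa [liftC, Matrix.submatrix_submatrix, Function.comp] using this

lemma liftS_inj : Function.Injective (liftS (m := m) (L := L)) := by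
  intro M M' h
  have := congrArg (fun X => X.submatrix (esp m L) (esp m L)) h
  simpa [liftS, Matrix.submatrix_submatrix, Function.comp] using this

lemma liftS_mul_liftS (A B : Matrix ((Fin m × Fin L) ⊕ Fin L) ((Fin m × Fin L) ⊕ Fin L) ℂ) :
    liftS A * liftS B = liftS (A * B) := by
  ext r cc
  simp only [liftS, Matrix.mul_apply, Matrix.submatrix_apply, id]
  exact Fintype.sum_equiv (esp m L).symm _ _ fun k => rfl

lemma liftS_mul_liftR (A : Matrix ((Fin m × Fin L) ⊕ Fin L) ((Fin m × Fin L) ⊕ Fin L) ℂ)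
    (B : Matrix ((Fin m × Fin L) ⊕ Fin L) γ ℂ) :
    liftS A * liftR B = liftR (A * B) := by
  ext r cc
  simp only [liftS, liftR, Matrix.mul_apply, Matrix.submatrix_apply, id]
  exact Fintype.sum_equiv (esp m L).symm _ _ fun k => rfl

lemma liftR_mul (A : Matrix ((Fin m × Fin L) ⊕ Fin L) γ ℂ) (B : Matrix γ γ' ℂ) :
    liftR A * B = liftR (A * B) := by
  ext r cc
  simp [liftR, Matrix.mul_apply]

lemma liftC_mul_liftS (A : Matrix γ ((Fin m × Fin L) ⊕ Fin L) ℂ)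
    (B : Matrix ((Fin m × Fin L) ⊕ Fin L) ((Fin m × Fin L) ⊕ Fin L) ℂ) :
    liftC A * liftS B = liftC (A * B) := by
  ext r cc
  simp only [liftC, liftS, Matrix.mul_apply, Matrix.submatrix_apply, id]
  exact Fintype.sum_equiv (esp m L).symm _ _ fun k => rfl

lemma liftC_mul_liftR (A : Matrix γ ((Fin m × Fin L) ⊕ Fin L) ℂ)
    (B : Matrix ((Fin m × Fin L) ⊕ Fin L) γ' ℂ) :
    liftC A * liftR B = A * B := by
  ext r cc
  simp only [liftC, liftR, Matrix.mul_apply, Matrix.submatrix_apply, id]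
  exact Fintype.sum_equiv (esp m L).symm _ _ fun k => rfl

lemma liftR_mul_liftC (A : Matrix ((Fin m × Fin L) ⊕ Fin L) γ ℂ)
    (B : Matrix γ ((Fin m × Fin L) ⊕ Fin L) ℂ) :
    liftR A * liftC B = liftS (A * B) := by
  ext r cc
  simp [liftR, liftC, liftS, Matrix.mul_apply]

lemma mul_liftC (A : Matrix γ' γ ℂ) (B : Matrix γ ((Fin m × Fin L) ⊕ Fin L) ℂ) :
    A * liftC B = liftC (A * B) := by
  ext r cc
  simp [liftC, Matrix.mul_apply]

lemma liftS_one : liftS (1 : Matrix ((Fin m × Fin L) ⊕ Fin L) _ ℂ) = 1 := by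
  unfold liftS
  exact Matrix.submatrix_one_equiv (esp m L).symm

lemma liftS_conjTranspose (A : Matrix ((Fin m × Fin L) ⊕ Fin L) ((Fin m × Fin L) ⊕ Fin L) ℂ) :
    (liftS A)ᴴ = liftS Aᴴ := rfl

lemma liftR_conjTranspose (A : Matrix ((Fin m × Fin L) ⊕ Fin L) γ ℂ) :
    (liftR A)ᴴ = liftC Aᴴ := rfl

lemma liftC_conjTranspose (A : Matrix γ ((Fin m × Fin L) ⊕ Fin L) ℂ) :
    (liftC A)ᴴ = liftR Aᴴ := rfl

lemma liftR_add (A B : Matrix ((Fin m × Fin L) ⊕ Fin L) γ ℂ) :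
    liftR A + liftR B = liftR (A + B) := rfl

lemma liftS_add (A B : Matrix ((Fin m × Fin L) ⊕ Fin L) ((Fin m × Fin L) ⊕ Fin L) ℂ) :
    liftS A + liftS B = liftS (A + B) := rfl

lemma liftC_add (A B : Matrix γ ((Fin m × Fin L) ⊕ Fin L) ℂ) :
    liftC A + liftC B = liftC (A + B) := rfl

lemma liftR_sub (A B : Matrix ((Fin m × Fin L) ⊕ Fin L) γ ℂ) :
    liftR A - liftR B = liftR (A - B) := rfl

lemma liftR_zero : liftR (0 : Matrix ((Fin m × Fin L) ⊕ Fin L) γ ℂ) = 0 := rfl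

lemma liftC_zero : liftC (0 : Matrix γ ((Fin m × Fin L) ⊕ Fin L) ℂ) = 0 := rfl

lemma liftS_isUnit_iff (A : Matrix ((Fin m × Fin L) ⊕ Fin L) ((Fin m × Fin L) ⊕ Fin L) ℂ) :
    IsUnit (liftS A) ↔ IsUnit A := by
  rw [Matrix.isUnit_iff_isUnit_det, Matrix.isUnit_iff_isUnit_det, liftS,
    Matrix.det_submatrix_equiv_self]

lemma liftS_rank (A : Matrix ((Fin m × Fin L) ⊕ Fin L) ((Fin m × Fin L) ⊕ Fin L) ℂ) :
    (liftS A).rank = A.rank :=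
  Matrix.rank_submatrix A (esp m L).symm (esp m L).symm

lemma liftR_apply_castSucc (M : Matrix ((Fin m × Fin L) ⊕ Fin L) γ ℂ) (i : Fin m)
    (aa : Fin L) (cc : γ) : liftR M (Fin.castSucc i, aa) cc = M (Sum.inl (i, aa)) cc := by
  simp [liftR, esp_symm_castSucc]

lemma liftR_apply_last (M : Matrix ((Fin m × Fin L) ⊕ Fin L) γ ℂ) (aa : Fin L) (cc : γ) :
    liftR M (Fin.last m, aa) cc = M (Sum.inr aa) cc := by
  simp [liftR, esp_symm_last]

lemma liftR_unlift (M : Matrix ((Fin m × Fin L) ⊕ Fin L) γ ℂ) :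
    (liftR M).submatrix (esp m L) (id : γ → γ) = M := by
  simp [liftR, Matrix.submatrix_submatrix, Function.comp]

lemma liftR_fst (P : Matrix (Fin m × Fin L) γ ℂ) (Q : Matrix (Fin L) γ ℂ) :
    (liftR (Matrix.fromRows P Q)).submatrix (fun k => esp m L (Sum.inl k)) (id : γ → γ)
      = P := by
  ext k cc
  simp [liftR, Matrix.submatrix_apply]

end Aux


section Aux2

open Matrix

set_option linter.unusedSectionVars false

variable {a a' b c : Type*} [Fintype a] [Fintype a'] [Fintype b] [Fintype c]
variable [DecidableEq a] [DecidableEq a'] [DecidableEq b] [DecidableEq c]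

lemma isUnit_of_conjTranspose_mul (U : Matrix a a ℂ) (hU : Uᴴ * U = 1) :
    IsUnit U := by
  rw [Matrix.isUnit_iff_isUnit_det]
  have h : Uᴴ.det * U.det = 1 := by rw [← Matrix.det_mul, hU, Matrix.det_one]
  exact IsUnit.of_mul_eq_one _ (by rw [mul_comm]; exact h)

lemma rank_mul_eq_of_orth {n : Type*} [Fintype n] (W : Matrix n a ℂ) (hW : Wᴴ * W = 1)
    (M : Matrix a b ℂ) : (W * M).rank = M.rank := by
  refine le_antisymm (Matrix.rank_mul_le_right _ _) ?_
  have h : M = Wᴴ * (W * M) := by rw [← Matrix.mul_assoc, hW, Matrix.one_mul]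
  conv_lhs => rw [h]
  exact Matrix.rank_mul_le_right _ _

lemma one_submatrix_mul' (e : a' → a) (M : Matrix a b ℂ) :
    (1 : Matrix a a ℂ).submatrix e id * M = M.submatrix e id := by
  ext r cc
  simp [Matrix.mul_apply, Matrix.one_apply, Matrix.submatrix_apply, ite_mul,
    Finset.sum_ite_eq]

lemma rank_submatrix_row_equiv (e : a' ≃ a)
    (M : Matrix a b ℂ) : (M.submatrix e id).rank = M.rank := by
  refine le_antisymm ?_ ?_
  · rw [← one_submatrix_mul' (e : a' → a) M]
    exact Matrix.rank_mul_le_right _ _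
  · have h : M = ((1 : Matrix a' a' ℂ).submatrix e.symm id) * M.submatrix e id := by
      rw [one_submatrix_mul']
      ext r cc
      simp [Matrix.submatrix_apply]
    conv_lhs => rw [h]
    exact Matrix.rank_mul_le_right _ _

lemma liftR_rank {m L : ℕ} {γ : Type*} [Fintype γ] [DecidableEq γ]
    (M : Matrix ((Fin m × Fin L) ⊕ Fin L) γ ℂ) : (liftR M).rank = M.rank :=
  rank_submatrix_row_equiv (esp m L).symm M

lemma rank_fromRows_zero (A : Matrix a c ℂ) :
    (Matrix.fromRows A (0 : Matrix b c ℂ)).rank = A.rank := by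
  refine le_antisymm ?_ ?_
  · have h : Matrix.fromRows A (0 : Matrix b c ℂ) =
        Matrix.fromRows (1 : Matrix a a ℂ) (0 : Matrix b a ℂ) * A := by
      rw [Matrix.fromRows_mul, Matrix.one_mul, Matrix.zero_mul]
    rw [h]
    exact Matrix.rank_mul_le_right _ _
  · have h : A = Matrix.fromCols (1 : Matrix a a ℂ) (0 : Matrix a b ℂ) *
        Matrix.fromRows A (0 : Matrix b c ℂ) := by
      rw [Matrix.fromCols_mul_fromRows, Matrix.one_mul, Matrix.zero_mul, add_zero]
    conv_lhs => rw [h]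
    exact Matrix.rank_mul_le_right _ _

lemma rank_zero_fromRows (A : Matrix b c ℂ) :
    (Matrix.fromRows (0 : Matrix a c ℂ) A).rank = A.rank := by
  refine le_antisymm ?_ ?_
  · have h : Matrix.fromRows (0 : Matrix a c ℂ) A =
        Matrix.fromRows (0 : Matrix a b ℂ) (1 : Matrix b b ℂ) * A := by
      rw [Matrix.fromRows_mul, Matrix.one_mul, Matrix.zero_mul]
    rw [h]
    exact Matrix.rank_mul_le_right _ _
  · have h : A = Matrix.fromCols (0 : Matrix b a ℂ) (1 : Matrix b b ℂ) *
        Matrix.fromRows (0 : Matrix a c ℂ) A := by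
      rw [Matrix.fromCols_mul_fromRows, Matrix.one_mul, Matrix.zero_mul, zero_add]
    conv_lhs => rw [h]
    exact Matrix.rank_mul_le_right _ _

lemma rank_fromBlocks_unit_row {κ δ : Type*} [Fintype κ] [Fintype δ] [DecidableEq κ]
    [DecidableEq δ]
    (R : Matrix κ κ ℂ) (Z : Matrix κ δ ℂ) (hR : IsUnit R) :
    (Matrix.fromBlocks R Z (0 : Matrix δ κ ℂ) (0 : Matrix δ δ ℂ)).rank = Fintype.card κ := by
  rw [← Matrix.fromRows_fromCols_eq_fromBlocks, Matrix.fromCols_zero, rank_fromRows_zero]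
  refine le_antisymm (Matrix.rank_le_card_height _) ?_
  have h : R = Matrix.fromCols R Z * Matrix.fromRows (1 : Matrix κ κ ℂ) (0 : Matrix δ κ ℂ) := by
    rw [Matrix.fromCols_mul_fromRows, Matrix.mul_one, Matrix.mul_zero, add_zero]
  calc Fintype.card κ = R.rank := (Matrix.rank_of_isUnit R hR).symm
    _ ≤ _ := by
      conv_lhs => rw [h]
      exact Matrix.rank_mul_le_left _ _

lemma isUnit_of_rank_eq_card (A : Matrix a a ℂ)
    (h : A.rank = Fintype.card a) : IsUnit A := by
  rw [← Matrix.mulVec_surjective_iff_isUnit]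
  have hr : LinearMap.range A.mulVecLin = ⊤ := by
    apply Submodule.eq_top_of_finrank_eq
    rw [show Module.finrank ℂ ↥(LinearMap.range A.mulVecLin) = A.rank from rfl, h,
      Module.finrank_pi]
  intro v
  have := LinearMap.range_eq_top.mp hr
  exact this v

/-- block upper triangular with invertible `R`: if the rank equals `card κ`,
the lower-right block vanishes. -/
lemma fromBlocks_rank_eq_imp_zero {κ δ : Type*} [Fintype κ] [Fintype δ]
    [DecidableEq κ] [DecidableEq δ]
    (R : Matrix κ κ ℂ) (Z : Matrix κ δ ℂ) (H : Matrix δ δ ℂ) (hR : IsUnit R)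
    (h : (Matrix.fromBlocks R Z (0 : Matrix δ κ ℂ) H).rank = Fintype.card κ) : H = 0 := by
  set M := Matrix.fromBlocks R Z (0 : Matrix δ κ ℂ) H with hM
  set E := Matrix.fromBlocks (1 : Matrix κ κ ℂ) (0 : Matrix κ δ ℂ)
      (0 : Matrix δ κ ℂ) (0 : Matrix δ δ ℂ) with hE
  have hM' : M * E = Matrix.fromBlocks R (0 : Matrix κ δ ℂ) (0 : Matrix δ κ ℂ)
      (0 : Matrix δ δ ℂ) := by
    rw [hM, hE, Matrix.fromBlocks_multiply]
    simp
  have hrank' : (M * E).rank = Fintype.card κ := by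
    rw [hM']
    exact rank_fromBlocks_unit_row R 0 hR
  have hle : LinearMap.range (M * E).mulVecLin ≤ LinearMap.range M.mulVecLin := by
    rw [Matrix.mulVecLin_mul]
    exact LinearMap.range_comp_le_range _ _
  have heq : LinearMap.range (M * E).mulVecLin = LinearMap.range M.mulVecLin := by
    apply Submodule.eq_of_le_of_finrank_le hle
    show Module.finrank ℂ ↥(LinearMap.range M.mulVecLin) ≤ _
    rw [show Module.finrank ℂ ↥(LinearMap.range M.mulVecLin) = M.rank from rfl,
      show Module.finrank ℂ ↥(LinearMap.range (M * E).mulVecLin) = (M * E).rank from rfl,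
      h, hrank']
  ext dd cc
  have hmem : (fun r => M r (Sum.inr cc)) ∈ LinearMap.range M.mulVecLin := by
    refine ⟨Pi.single (Sum.inr cc) 1, ?_⟩
    ext r
    simp [Matrix.mulVecLin_apply, Matrix.mulVec, dotProduct, Pi.single_apply, mul_ite,
      Finset.sum_ite_eq']
  rw [← heq] at hmem
  obtain ⟨x, hx⟩ := hmem
  have hval := congrFun hx (Sum.inr dd)
  have hzero : ((M * E).mulVecLin x) (Sum.inr dd) = 0 := by
    simp only [Matrix.mulVecLin_apply, Matrix.mulVec, dotProduct]
    apply Finset.sum_eq_zero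
    rintro (k | k) _
    · rw [hM']
      simp [Matrix.fromBlocks]
    · rw [hM']
      simp [Matrix.fromBlocks]
  rw [hzero] at hval
  have : M (Sum.inr dd) (Sum.inr cc) = 0 := hval.symm
  rw [hM] at this
  simpa using this

lemma toBlocks₁₁_one {κ δ : Type*} [DecidableEq κ] [DecidableEq δ] :
    (1 : Matrix (κ ⊕ δ) (κ ⊕ δ) ℂ).toBlocks₁₁ = 1 := by
  ext i j
  simp [Matrix.toBlocks₁₁, Matrix.one_apply]

lemma toBlocks₂₂_one {κ δ : Type*} [DecidableEq κ] [DecidableEq δ] :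
    (1 : Matrix (κ ⊕ δ) (κ ⊕ δ) ℂ).toBlocks₂₂ = 1 := by
  ext i j
  simp [Matrix.toBlocks₂₂, Matrix.one_apply]

lemma toBlocks₁₂_one {κ δ : Type*} [DecidableEq κ] [DecidableEq δ] :
    (1 : Matrix (κ ⊕ δ) (κ ⊕ δ) ℂ).toBlocks₁₂ = 0 := by
  ext i j
  simp [Matrix.toBlocks₁₂, Matrix.one_apply]

end Aux2


section Aux3

open Matrix

set_option linter.unusedSectionVars false

variable {m L : ℕ} {γ γ' : Type*} [Fintype γ] [Fintype γ']

lemma vcat_rep (T : Matrix (Fin m × Fin L) γ ℂ) (Bo : Matrix (Fin L) γ ℂ) :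
    vcat T Bo = liftR (Matrix.fromRows T Bo) := by
  ext r cc
  simp only [vcat, liftR, Matrix.of_apply, Matrix.submatrix_apply, esp_symm_apply, id]
  by_cases h : (r.1 : ℕ) < m <;> simp [h]

lemma stackZero_rep (R : Matrix (Fin m × Fin L) (Fin m × Fin L) ℂ) :
    stackZero R = liftR (Matrix.fromRows R 0) := by
  ext r cc
  simp only [stackZero, liftR, Matrix.of_apply, Matrix.submatrix_apply, esp_symm_apply, id]
  by_cases h : (r.1 : ℕ) < m <;> simp [h]

/-- Split any block-row matrix into its top rows and last block row. -/
lemma rowSplit (M : Matrix (Fin (m+1) × Fin L) γ ℂ) :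
    M = liftR (Matrix.fromRows
      (M.submatrix (fun k : Fin m × Fin L => (Fin.castSucc k.1, k.2)) id)
      (M.submatrix (fun aa : Fin L => (Fin.last m, aa)) id)) := by
  ext r cc
  obtain ⟨i, aa⟩ := r
  simp only [liftR, Matrix.submatrix_apply, esp_symm_apply, id]
  by_cases h : (i : ℕ) < m
  · rw [dif_pos h]
    simp only [Matrix.fromRows_apply_inl, Matrix.submatrix_apply, id]
    congr 1
  · rw [dif_neg h]
    simp only [Matrix.fromRows_apply_inr, Matrix.submatrix_apply, id]
    congr 1
    refine Prod.ext (Fin.ext ?_) rfl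
    have := i.isLt
    simp only [Fin.val_last]
    omega

lemma extendOne_rep (Q : Matrix (Fin m × Fin L) (Fin m × Fin L) ℂ) :
    extendOne Q = liftS (Matrix.fromBlocks Q 0 0 (1 : Matrix (Fin L) (Fin L) ℂ)) := by
  ext r cc
  obtain ⟨i, aa⟩ := r
  obtain ⟨j, bb⟩ := cc
  simp only [extendOne, liftS, Matrix.of_apply, Matrix.submatrix_apply, esp_symm_apply]
  by_cases h1 : (i : ℕ) < m <;> by_cases h2 : (j : ℕ) < m <;>
    simp [h1, h2, Matrix.one_apply]

lemma twoBlock_rep (R : Matrix (Fin m × Fin L) (Fin m × Fin L) ℂ)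
    (Z : Matrix (Fin m × Fin L) (Fin L) ℂ) (N : Matrix (Fin L) (Fin L) ℂ) :
    twoBlock R Z N = liftS (Matrix.fromBlocks R Z 0 N) := by
  ext r cc
  obtain ⟨i, aa⟩ := r
  obtain ⟨j, bb⟩ := cc
  simp only [twoBlock, liftS, Matrix.of_apply, Matrix.submatrix_apply, esp_symm_apply]
  by_cases h1 : (i : ℕ) < m <;> by_cases h2 : (j : ℕ) < m <;> simp [h1, h2]

lemma EL_rep (hm : 0 < m) : EL (m+1) L = liftR (Matrix.fromRows (EL m L) 0) := by
  ext r cc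
  obtain ⟨i, aa⟩ := r
  simp only [EL, liftR, Matrix.of_apply, Matrix.submatrix_apply, esp_symm_apply, id]
  by_cases h : (i : ℕ) < m
  · simp [h, EL]
  · have hi : (i : ℕ) = m := by have := i.isLt; omega
    simp only [dif_neg h, Matrix.fromRows_apply_inr, Matrix.zero_apply]
    rw [if_neg]
    rintro ⟨h0, -⟩
    omega

lemma pair_ne_of_val_ne {m m' : ℕ} {i : Fin m} {j : Fin m'} {h : m = m'} : True := trivial

lemma pair_ne {m : ℕ} {i j : Fin m} {aa bb : Fin L} (h : (i : ℕ) ≠ (j : ℕ)) :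
    ((i, aa) : Fin m × Fin L) ≠ (j, bb) := fun hh =>
  h (congrArg (fun x : Fin m × Fin L => ((x.1 : Fin m) : ℕ)) hh)

lemma threeBlock_rep (R : Matrix (Fin m × Fin L) (Fin m × Fin L) ℂ)
    (Z : Matrix (Fin m × Fin L) (Fin L) ℂ) (A B : Matrix (Fin L) (Fin L) ℂ) :
    threeBlock R Z A B = liftR (m := m+1) (Matrix.fromRows (twoBlock R Z A)
      (liftC (Matrix.fromCols (0 : Matrix (Fin L) (Fin m × Fin L) ℂ) B))) := by
  ext r cc
  obtain ⟨i, aa⟩ := r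
  obtain ⟨j, bb⟩ := cc
  simp only [threeBlock, liftR, liftC, Matrix.of_apply, Matrix.submatrix_apply,
    esp_symm_apply, id]
  by_cases h1 : (i : ℕ) < m + 1
  · rw [dif_pos h1]
    simp only [Matrix.fromRows_apply_inl]
    by_cases h2 : (i : ℕ) < m <;> by_cases h3 : (j : ℕ) < m
    · simp only [twoBlock, Matrix.of_apply]; simp [h2, h3]
    · simp only [twoBlock, Matrix.of_apply]; simp [h2, h3]
    · simp only [twoBlock, Matrix.of_apply]; simp [h2, h3]
    · have hi : (i : ℕ) = m := by omega
      simp only [twoBlock, Matrix.of_apply]; simp [h2, h3, hi]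
  · have hi : (i : ℕ) = m + 1 := by have := i.isLt; omega
    rw [dif_neg h1]
    simp only [Matrix.fromRows_apply_inr, Matrix.submatrix_apply, esp_symm_apply, id]
    have h2 : ¬ (i : ℕ) < m := by omega
    have h4 : (i : ℕ) ≠ m := by omega
    by_cases h3 : (j : ℕ) < m <;> simp [h2, h3, h4]

lemma trailingTwo_rep (Q11 Q12 Q21 Q22 : Matrix (Fin L) (Fin L) ℂ) :
    trailingTwo (m := m) Q11 Q12 Q21 Q22 = liftS (m := m+1) (Matrix.fromBlocks
      (liftS (Matrix.fromBlocks (1 : Matrix (Fin m × Fin L) (Fin m × Fin L) ℂ) 0 0 Q11))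
      (liftR (Matrix.fromRows (0 : Matrix (Fin m × Fin L) (Fin L) ℂ) Q12))
      (liftC (Matrix.fromCols (0 : Matrix (Fin L) (Fin m × Fin L) ℂ) Q21))
      Q22) := by
  ext r cc
  obtain ⟨i, aa⟩ := r
  obtain ⟨j, bb⟩ := cc
  simp only [trailingTwo, liftS, liftR, liftC, Matrix.of_apply, Matrix.submatrix_apply,
    esp_symm_apply, id]
  by_cases h1 : (i : ℕ) < m + 1 <;> by_cases h2 : (j : ℕ) < m + 1
  · rw [dif_pos h1, dif_pos h2]
    by_cases h3 : (i : ℕ) < m <;> by_cases h4 : (j : ℕ) < m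
    · rw [Matrix.fromBlocks_apply₁₁]
      simp only [liftS, Matrix.submatrix_apply, esp_symm_apply]
      rw [dif_pos h3, dif_pos h4, Matrix.fromBlocks_apply₁₁]
      simp [Matrix.one_apply, Prod.ext_iff, Fin.ext_iff, h3, h4]
    · have hj : (j : ℕ) = m := by omega
      rw [Matrix.fromBlocks_apply₁₁]
      simp only [liftS, Matrix.submatrix_apply, esp_symm_apply]
      rw [dif_pos h3, dif_neg h4, Matrix.fromBlocks_apply₁₂]
      simp only [Matrix.zero_apply]
      rw [if_pos (Or.inl h3), if_neg (pair_ne (by omega))]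
    · have hi : (i : ℕ) = m := by omega
      rw [Matrix.fromBlocks_apply₁₁]
      simp only [liftS, Matrix.submatrix_apply, esp_symm_apply]
      rw [dif_neg h3, dif_pos h4, Matrix.fromBlocks_apply₂₁]
      simp only [Matrix.zero_apply]
      rw [if_pos (Or.inr h4), if_neg (pair_ne (by omega))]
    · have hi : (i : ℕ) = m := by omega
      have hj : (j : ℕ) = m := by omega
      rw [Matrix.fromBlocks_apply₁₁]
      simp only [liftS, Matrix.submatrix_apply, esp_symm_apply]
      rw [dif_neg h3, dif_neg h4, Matrix.fromBlocks_apply₂₂]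
      rw [if_neg (by omega : ¬ ((i:ℕ) < m ∨ (j:ℕ) < m)), if_pos hi, if_pos hj]
  · have hj : (j : ℕ) = m + 1 := by omega
    rw [dif_pos h1, dif_neg h2, Matrix.fromBlocks_apply₁₂]
    simp only [liftR, Matrix.submatrix_apply, esp_symm_apply, id]
    by_cases h3 : (i : ℕ) < m
    · rw [dif_pos h3, Matrix.fromRows_apply_inl]
      simp only [Matrix.zero_apply]
      rw [if_pos (Or.inl h3), if_neg (pair_ne (by omega))]
    · have hi : (i : ℕ) = m := by omega
      rw [dif_neg h3, Matrix.fromRows_apply_inr]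
      rw [if_neg (by omega : ¬ ((i:ℕ) < m ∨ (j:ℕ) < m)), if_pos hi, if_neg (by omega : ¬ (j:ℕ) = m)]
  · have hi : (i : ℕ) = m + 1 := by omega
    rw [dif_neg h1, dif_pos h2, Matrix.fromBlocks_apply₂₁]
    simp only [liftC, Matrix.submatrix_apply, esp_symm_apply, id]
    by_cases h4 : (j : ℕ) < m
    · rw [dif_pos h4, Matrix.fromCols_apply_inl]
      simp only [Matrix.zero_apply]
      rw [if_pos (Or.inr h4), if_neg (pair_ne (by omega))]
    · have hj : (j : ℕ) = m := by omega
      rw [dif_neg h4, Matrix.fromCols_apply_inr]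
      rw [if_neg (by omega : ¬ ((i:ℕ) < m ∨ (j:ℕ) < m)), if_neg (by omega : ¬ (i:ℕ) = m), if_pos hj]
  · have hi : (i : ℕ) = m + 1 := by omega
    have hj : (j : ℕ) = m + 1 := by omega
    rw [dif_neg h1, dif_neg h2, Matrix.fromBlocks_apply₂₂]
    rw [if_neg (by omega : ¬ ((i:ℕ) < m ∨ (j:ℕ) < m)), if_neg (by omega : ¬ (i:ℕ) = m),
      if_neg (by omega : ¬ (j:ℕ) = m)]

lemma mul_liftR (M : Matrix γ (Fin (m+1) × Fin L) ℂ)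
    (X : Matrix ((Fin m × Fin L) ⊕ Fin L) γ' ℂ) :
    M * liftR X = M.submatrix id (esp m L) * X := by
  ext r cc
  simp only [liftR, Matrix.mul_apply, Matrix.submatrix_apply, id]
  refine (Fintype.sum_equiv (esp m L) _ _ fun y => ?_).symm
  rw [Equiv.symm_apply_apply]

lemma mul_submatrix_cols {β β' : Type*} [Fintype β] [Fintype β']
    (M : Matrix γ γ' ℂ) (N : Matrix γ' β ℂ) (f : β' → β) :
    M * N.submatrix id f = (M * N).submatrix id f := by
  ext r cc
  simp [Matrix.mul_apply]

end Aux3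


section Aux4

open Matrix

/-- The core 2×2 unitary argument: `Ĥ_jj = 0` iff `Q_j^{(11)} = 0`. -/
lemma keyB {L : ℕ} (Q11 Q12 Q21 Q22 N Hhat Hsub : Matrix (Fin L) (Fin L) ℂ)
    (hN : IsUnit N) (eT : Q11 * Hhat + Q12 * Hsub = N) (eB : Q21 * Hhat + Q22 * Hsub = 0)
    (u11 : Q11ᴴ * Q11 + Q21ᴴ * Q21 = 1) (u12 : Q11ᴴ * Q12 + Q21ᴴ * Q22 = 0) :
    Hhat = 0 ↔ Q11 = 0 := by
  constructor
  · intro h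
    rw [h, Matrix.mul_zero, zero_add] at eT eB
    have hdetN : IsUnit N.det := (Matrix.isUnit_iff_isUnit_det _).mp hN
    rw [← eT, Matrix.det_mul] at hdetN
    have hQ12 : IsUnit Q12.det := isUnit_of_mul_isUnit_left hdetN
    have hHs : IsUnit Hsub.det := isUnit_of_mul_isUnit_right hdetN
    have hQ22 : Q22 = 0 := by
      have h2 := congrArg (fun X => X * Hsub⁻¹) eB
      simpa [Matrix.mul_assoc, Matrix.mul_nonsing_inv _ hHs] using h2
    rw [hQ22, Matrix.mul_zero, add_zero] at u12
    have hQ11H : Q11ᴴ = 0 := by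
      have h3 := congrArg (fun X => X * Q12⁻¹) u12
      simpa [Matrix.mul_assoc, Matrix.mul_nonsing_inv _ hQ12] using h3
    calc Q11 = Q11ᴴᴴ := (Matrix.conjTranspose_conjTranspose _).symm
      _ = 0 := by rw [hQ11H, Matrix.conjTranspose_zero]
  · intro h
    rw [h, Matrix.conjTranspose_zero, Matrix.zero_mul, zero_add] at u11 u12
    have hdet : Q21ᴴ.det * Q21.det = 1 := by rw [← Matrix.det_mul, u11, Matrix.det_one]
    have hQ21H : IsUnit Q21ᴴ.det := IsUnit.of_mul_eq_one _ hdet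
    have hQ21 : IsUnit Q21.det := IsUnit.of_mul_eq_one _ (by rw [mul_comm]; exact hdet)
    have hQ22 : Q22 = 0 := by
      have h2 := congrArg (fun X => (Q21ᴴ)⁻¹ * X) u12
      simpa [← Matrix.mul_assoc, Matrix.nonsing_inv_mul _ hQ21H] using h2
    rw [hQ22, Matrix.zero_mul, add_zero] at eB
    have h3 := congrArg (fun X => Q21⁻¹ * X) eB
    simpa [← Matrix.mul_assoc, Matrix.nonsing_inv_mul _ hQ21] using h3

end Aux4

/-- `H_j` is singular with `rank H_j = (j-1)L` if and only if block
GMRES totally stagnates at step `j`, i.e. `X_j^(G) = X_{j-1}^(G)`. -/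
theorem stmt11 {n L p : ℕ} (D : BlockArnoldi n L p) (S : QRSetup L p D.Hbar D.S0)
    (Yj : Matrix (Fin (p+1) × Fin L) (Fin L) ℂ) (hYj : IsBlockGMRESj D Yj)
    (Yprev : Matrix (Fin p × Fin L) (Fin L) ℂ) (hYprev : IsBlockGMRESprev D Yprev)
    (hF : (D.B - D.A * (D.X0 + D.Wprev * Yprev)).rank = L) :
    (¬ IsUnit D.Hsq ∧ D.Hsq.rank = p * L) ↔
      D.X0 + D.Wfull * Yj = D.X0 + D.Wprev * Yprev := by
  classical
  -- basic units
  have hQbarUnit : IsUnit S.Qbar := isUnit_of_conjTranspose_mul _ S.Qbar_unit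
  have hQbarDet : IsUnit S.Qbar.det := (Matrix.isUnit_iff_isUnit_det _).mp hQbarUnit
  have hRdet : IsUnit S.R.det := (Matrix.isUnit_iff_isUnit_det _).mp S.R_inv
  have hNdet : IsUnit S.N.det := (Matrix.isUnit_iff_isUnit_det _).mp S.N_inv
  set tT : Matrix (Fin (p+2) × Fin L) (Fin (p+2) × Fin L) ℂ :=
    trailingTwo (m := p) S.Q11 S.Q12 S.Q21 S.Q22 with htT
  set U : Matrix (Fin (p+2) × Fin L) (Fin (p+2) × Fin L) ℂ := tT * extendOne S.Qbar with hUdef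
  have hEQunit : (extendOne S.Qbar)ᴴ * extendOne S.Qbar = 1 := by
    rw [extendOne_rep, liftS_conjTranspose, liftS_mul_liftS, ← liftS_one]
    congr 1
    rw [Matrix.fromBlocks_conjTranspose, Matrix.fromBlocks_multiply]
    simp [S.Qbar_unit, Matrix.fromBlocks_one]
  have hUunit : Uᴴ * U = 1 := by
    have hcalc : Uᴴ * U = (extendOne S.Qbar)ᴴ * ((tTᴴ * tT) * extendOne S.Qbar) := by
      rw [hUdef, Matrix.conjTranspose_mul]
      simp only [Matrix.mul_assoc]
    rw [hcalc, htT, S.Qj_unit, Matrix.one_mul, hEQunit]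
  have hUH : U * D.Hbar = threeBlock S.R S.Z S.N 0 := by
    rw [hUdef, htT, Matrix.mul_assoc]
    exact S.qr_full
  have hQR : (U * D.Hbar).submatrix (esp (p+1) L) id
      = Matrix.fromRows (twoBlock S.R S.Z S.N) 0 := by
    rw [hUH, threeBlock_rep, Matrix.fromCols_zero, liftC_zero]
    exact liftR_unlift _
  have hRm : IsUnit (twoBlock S.R S.Z S.N) := by
    rw [twoBlock_rep, liftS_isUnit_iff, Matrix.isUnit_iff_isUnit_det,
      Matrix.det_fromBlocks_zero₂₁]
    exact hRdet.mul hNdet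
  -- the two least-squares relations
  have hYjRel : twoBlock S.R S.Z S.N * Yj
      = (U * (EL (p+2) L * D.S0)).submatrix (fun k => esp (p+1) L (Sum.inl k)) id :=
    unique_min_eq (esp (p+1) L) D.Hbar _ U hUunit _ hRm hQR Yj hYj
  have hQRprev : (S.Qbar * D.Hprev).submatrix (esp p L) id = Matrix.fromRows S.R 0 := by
    rw [show S.Qbar * D.Hprev = stackZero S.R from S.qr_prev, stackZero_rep]
    exact liftR_unlift _
  have hYpRel : S.R * Yprev
      = (S.Qbar * (EL (p+1) L * D.S0)).submatrix (fun k => esp p L (Sum.inl k)) id :=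
    unique_min_eq (esp p L) D.Hprev _ S.Qbar S.Qbar_unit _ S.R_inv hQRprev Yprev hYprev
  -- decompose T₀ = Q̄ (E S₀)
  set T0 : Matrix (Fin (p+1) × Fin L) (Fin L) ℂ := S.Qbar * (EL (p+1) L * D.S0) with hT0
  set T0t : Matrix (Fin p × Fin L) (Fin L) ℂ :=
    T0.submatrix (fun k : Fin p × Fin L => (Fin.castSucc k.1, k.2)) id with hT0tdef
  have hCtEq : T0.submatrix (fun aa : Fin L => (Fin.last p, aa)) id = S.Ct := by
    ext aa bb
    rfl
  have hT0split : T0 = liftR (Matrix.fromRows T0t S.Ct) := by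
    rw [← hCtEq]
    exact rowSplit T0
  have hYpRel' : S.R * Yprev = T0t := hYpRel
  -- compute the top rows of U (E S₀)
  have hEL2 : EL (p+2) L * D.S0 = liftR (m := p+1) (Matrix.fromRows (EL (p+1) L * D.S0) 0) := by
    rw [EL_rep (Nat.succ_pos p), liftR_mul, Matrix.fromRows_mul, Matrix.zero_mul]
  have hEQT : extendOne S.Qbar * (EL (p+2) L * D.S0)
      = liftR (m := p+1) (Matrix.fromRows T0 0) := by
    rw [hEL2, extendOne_rep, liftS_mul_liftR, Matrix.fromBlocks_mul_fromRows]
    simp only [Matrix.mul_zero, Matrix.zero_mul, add_zero, zero_add]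
    rfl
  have hK1T0 : liftS (Matrix.fromBlocks (1 : Matrix (Fin p × Fin L) (Fin p × Fin L) ℂ) 0 0 S.Q11)
      * T0 = liftR (Matrix.fromRows T0t (S.Q11 * S.Ct)) := by
    rw [hT0split, liftS_mul_liftR, Matrix.fromBlocks_mul_fromRows]
    simp only [Matrix.one_mul, Matrix.zero_mul, Matrix.mul_zero, add_zero, zero_add]
  have hUT : U * (EL (p+2) L * D.S0) = liftR (m := p+1) (Matrix.fromRows
      (liftR (Matrix.fromRows T0t (S.Q11 * S.Ct)))
      (liftC (Matrix.fromCols (0 : Matrix (Fin L) (Fin p × Fin L) ℂ) S.Q21) * T0)) := by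
    rw [hUdef, Matrix.mul_assoc, hEQT, htT, trailingTwo_rep, liftS_mul_liftR,
      Matrix.fromBlocks_mul_fromRows]
    simp only [Matrix.mul_zero, add_zero]
    rw [hK1T0]
  rw [hUT, liftR_fst] at hYjRel
  -- decompose Y_j
  set Yt : Matrix (Fin p × Fin L) (Fin L) ℂ :=
    Yj.submatrix (fun k : Fin p × Fin L => (Fin.castSucc k.1, k.2)) id with hYtdef
  set Yb : Matrix (Fin L) (Fin L) ℂ :=
    Yj.submatrix (fun aa : Fin L => (Fin.last p, aa)) id with hYbdef
  have hYjsplit : Yj = liftR (Matrix.fromRows Yt Yb) := rowSplit Yj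
  have hprod : twoBlock S.R S.Z S.N * Yj
      = liftR (Matrix.fromRows (S.R * Yt + S.Z * Yb)
        ((0 : Matrix (Fin L) (Fin p × Fin L) ℂ) * Yt + S.N * Yb)) := by
    conv_lhs => rw [twoBlock_rep, hYjsplit]
    rw [liftS_mul_liftR, Matrix.fromBlocks_mul_fromRows]
  have hTopEq := Matrix.fromRows_inj (liftR_inj (hprod.symm.trans hYjRel))
  have hE1 : S.R * Yt + S.Z * Yb = T0t := hTopEq.1
  have hE2 : S.N * Yb = S.Q11 * S.Ct := by
    have h := hTopEq.2
    rwa [Matrix.zero_mul, zero_add] at h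
  -- block equations from the two QR splittings
  have hsplit3 : tT * threeBlock S.R S.Z S.Hhat S.Hsub = threeBlock S.R S.Z S.N 0 := by
    rw [← S.qr_split, htT]
    exact S.qr_full
  have hstep : tT * threeBlock S.R S.Z S.Hhat S.Hsub = liftR (m := p+1) (Matrix.fromRows
      (liftS (Matrix.fromBlocks (1 : Matrix (Fin p × Fin L) (Fin p × Fin L) ℂ) 0 0 S.Q11)
          * twoBlock S.R S.Z S.Hhat
        + liftR (Matrix.fromRows (0 : Matrix (Fin p × Fin L) (Fin L) ℂ) S.Q12)
          * liftC (Matrix.fromCols 0 S.Hsub))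
      (liftC (Matrix.fromCols (0 : Matrix (Fin L) (Fin p × Fin L) ℂ) S.Q21)
          * twoBlock S.R S.Z S.Hhat
        + S.Q22 * liftC (Matrix.fromCols 0 S.Hsub))) := by
    rw [htT, trailingTwo_rep, threeBlock_rep, liftS_mul_liftR, Matrix.fromBlocks_mul_fromRows]
  have hEqs := Matrix.fromRows_inj (liftR_inj
    (hstep.symm.trans (hsplit3.trans (threeBlock_rep S.R S.Z S.N 0))))
  have eT : S.Q11 * S.Hhat + S.Q12 * S.Hsub = S.N := by
    have h1 := hEqs.1
    rw [twoBlock_rep, twoBlock_rep, liftS_mul_liftS, liftR_mul_liftC, liftS_add] at h1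
    have h2 := liftS_inj h1
    rw [Matrix.fromBlocks_multiply, Matrix.fromRows_mul_fromCols,
      Matrix.fromBlocks_add] at h2
    have h3 := congrArg Matrix.toBlocks₂₂ h2
    simpa [Matrix.toBlocks_fromBlocks₂₂] using h3
  have eB : S.Q21 * S.Hhat + S.Q22 * S.Hsub = 0 := by
    have h1 := hEqs.2
    rw [twoBlock_rep, liftC_mul_liftS, mul_liftC, liftC_add] at h1
    have h2 := liftC_inj h1
    rw [Matrix.fromCols_mul_fromBlocks, Matrix.mul_fromCols, fromColumns_add] at h2
    have h3 := (Matrix.fromCols_inj h2).2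
    simpa using h3
  -- the unitarity relations
  have hQsum := S.Qj_unit
  rw [trailingTwo_rep, liftS_conjTranspose, liftS_mul_liftS, ← liftS_one] at hQsum
  have hQsum2 := liftS_inj hQsum
  rw [Matrix.fromBlocks_conjTranspose, Matrix.fromBlocks_multiply] at hQsum2
  have u11 : S.Q11ᴴ * S.Q11 + S.Q21ᴴ * S.Q21 = 1 := by
    have h1 := congrArg Matrix.toBlocks₁₁ hQsum2
    simp only [Matrix.toBlocks_fromBlocks₁₁, toBlocks₁₁_one] at h1
    rw [liftS_conjTranspose, liftC_conjTranspose, liftS_mul_liftS, liftR_mul_liftC,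
      liftS_add, ← liftS_one] at h1
    have h2 := liftS_inj h1
    rw [Matrix.fromBlocks_conjTranspose, Matrix.fromBlocks_multiply,
      Matrix.conjTranspose_fromCols_eq_fromRows_conjTranspose,
      Matrix.fromRows_mul_fromCols, Matrix.fromBlocks_add] at h2
    have h3 := congrArg Matrix.toBlocks₂₂ h2
    simpa [Matrix.toBlocks_fromBlocks₂₂, toBlocks₂₂_one] using h3
  have u12 : S.Q11ᴴ * S.Q12 + S.Q21ᴴ * S.Q22 = 0 := by
    have h1 := congrArg Matrix.toBlocks₁₂ hQsum2
    simp only [Matrix.toBlocks_fromBlocks₁₂, toBlocks₁₂_one] at h1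
    rw [liftS_conjTranspose, liftC_conjTranspose, liftS_mul_liftR, liftR_mul, liftR_add] at h1
    have h2 : (Matrix.fromBlocks (1 : Matrix (Fin p × Fin L) (Fin p × Fin L) ℂ) 0 0 S.Q11)ᴴ
        * Matrix.fromRows (0 : Matrix (Fin p × Fin L) (Fin L) ℂ) S.Q12
        + (Matrix.fromCols (0 : Matrix (Fin L) (Fin p × Fin L) ℂ) S.Q21)ᴴ * S.Q22
        = 0 :=
      liftR_inj (h1.trans liftR_zero.symm)
    rw [Matrix.fromBlocks_conjTranspose, Matrix.fromBlocks_mul_fromRows,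
      Matrix.conjTranspose_fromCols_eq_fromRows_conjTranspose, Matrix.fromRows_mul,
      fromRows_add] at h2
    have h3 := congrArg Matrix.toRows₂ h2
    simp only [Matrix.toRows₂_fromRows] at h3
    simp at h3
    exact h3
  -- Part A : the rank/singularity condition is equivalent to `Hhat = 0`
  have hQH : S.Qbar * D.Hsq = twoBlock S.R S.Z S.Hhat := by
    have hHb : D.Hbar = liftR (m := p+1) (Matrix.fromRows
        (D.Hbar.submatrix (fun k : Fin (p+1) × Fin L => (Fin.castSucc k.1, k.2)) id)
        (D.Hbar.submatrix (fun aa : Fin L => (Fin.last (p+1), aa)) id)) := rowSplit D.Hbar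
    have hchain : liftR (m := p+1) (Matrix.fromRows
        (S.Qbar * D.Hbar.submatrix (fun k : Fin (p+1) × Fin L => (Fin.castSucc k.1, k.2)) id
          + (0 : Matrix (Fin (p+1) × Fin L) (Fin L) ℂ)
            * D.Hbar.submatrix (fun aa : Fin L => (Fin.last (p+1), aa)) id)
        ((0 : Matrix (Fin L) (Fin (p+1) × Fin L) ℂ)
            * D.Hbar.submatrix (fun k : Fin (p+1) × Fin L => (Fin.castSucc k.1, k.2)) id
          + (1 : Matrix (Fin L) (Fin L) ℂ)
            * D.Hbar.submatrix (fun aa : Fin L => (Fin.last (p+1), aa)) id))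
        = threeBlock S.R S.Z S.Hhat S.Hsub := by
      rw [← Matrix.fromBlocks_mul_fromRows, ← liftS_mul_liftR, ← hHb, ← extendOne_rep]
      exact S.qr_split
    have h2 := (Matrix.fromRows_inj (liftR_inj
      (hchain.trans (threeBlock_rep S.R S.Z S.Hhat S.Hsub)))).1
    have hHsqEq : D.Hsq = D.Hbar.submatrix
        (fun k : Fin (p+1) × Fin L => (Fin.castSucc k.1, k.2)) id := by
      ext k cc
      obtain ⟨a, b⟩ := k
      rfl
    rw [hHsqEq]
    simpa using h2
  have hUnitIff : IsUnit D.Hsq ↔ IsUnit S.Hhat := by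
    have hmul := Units.isUnit_units_mul hQbarUnit.unit D.Hsq
    rw [IsUnit.unit_spec] at hmul
    rw [← hmul, hQH, twoBlock_rep, liftS_isUnit_iff, Matrix.isUnit_iff_isUnit_det,
      Matrix.det_fromBlocks_zero₂₁]
    constructor
    · intro h
      exact (Matrix.isUnit_iff_isUnit_det _).mpr (isUnit_of_mul_isUnit_right h)
    · intro h
      exact hRdet.mul ((Matrix.isUnit_iff_isUnit_det _).mp h)
  have hRankEq : D.Hsq.rank = (Matrix.fromBlocks S.R S.Z 0 S.Hhat).rank := by
    rw [← Matrix.rank_mul_eq_right_of_isUnit_det S.Qbar D.Hsq hQbarDet, hQH, twoBlock_rep,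
      liftS_rank]
  have hcard : Fintype.card (Fin p × Fin L) = p * L := by
    simp [Fintype.card_prod]
  have hzero : ¬ IsUnit (0 : Matrix (Fin L) (Fin L) ℂ) := by
    intro hu
    have h01 := isUnit_zero_iff.mp hu
    have h2 := congrFun (congrFun h01 ⟨0, D.hL⟩) ⟨0, D.hL⟩
    simp [Matrix.one_apply] at h2
  have hAiff : (¬ IsUnit D.Hsq ∧ D.Hsq.rank = p * L) ↔ S.Hhat = 0 := by
    constructor
    · rintro ⟨-, hrk⟩
      exact fromBlocks_rank_eq_imp_zero S.R S.Z S.Hhat S.R_inv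
        (by rw [← hRankEq, hrk, hcard])
    · intro h
      refine ⟨?_, ?_⟩
      · rw [hUnitIff, h]
        exact hzero
      · rw [hRankEq, h, rank_fromBlocks_unit_row S.R S.Z S.R_inv, hcard]
  -- Part C : `Ct` is invertible since the previous residual has full rank
  have hWEL : D.W * EL (p+2) L
      = D.W.submatrix id (fun cc : Fin L => ((0 : Fin (p+2)), cc)) := by
    ext r cc
    simp only [Matrix.mul_apply, EL, Matrix.of_apply, Matrix.submatrix_apply, id]
    rw [Fintype.sum_prod_type]
    rw [Finset.sum_eq_single (0 : Fin (p+2))]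
    · simp [mul_ite, Finset.sum_ite_eq']
    · intro i _ hi
      apply Finset.sum_eq_zero
      intro aa _
      have hni : ¬ ((i : ℕ) = 0 ∧ aa = cc) := by
        rintro ⟨h0, -⟩
        exact hi (Fin.ext h0)
      simp [hni, hi]
    · intro h
      exact absurd (Finset.mem_univ _) h
  have hF0 : D.B - D.A * D.X0 = D.W * (EL (p+2) L * D.S0) := by
    rw [D.F0_eq, ← Matrix.mul_assoc, hWEL]
  have hWprev : D.Wprev
      = D.Wfull.submatrix id (fun k : Fin p × Fin L => (Fin.castSucc k.1, k.2)) := by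
    ext r k
    obtain ⟨k1, k2⟩ := k
    rfl
  have hAWprev : D.A * D.Wprev
      = D.W * (D.Hbar.submatrix id (fun k : Fin p × Fin L => (Fin.castSucc k.1, k.2))) := by
    rw [hWprev, mul_submatrix_cols, show D.A * D.Wfull = D.W * D.Hbar from D.arnoldi,
      ← mul_submatrix_cols]
  have hFwd : D.B - D.A * (D.X0 + D.Wprev * Yprev)
      = D.W * (EL (p+2) L * D.S0
        - D.Hbar.submatrix id (fun k : Fin p × Fin L => (Fin.castSucc k.1, k.2)) * Yprev) := by
    rw [Matrix.mul_add, ← sub_sub, hF0, ← Matrix.mul_assoc D.A D.Wprev Yprev, hAWprev,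
      Matrix.mul_assoc, ← Matrix.mul_sub]
  set Mbig : Matrix (Fin (p+2) × Fin L) (Fin L) ℂ := EL (p+2) L * D.S0
    - D.Hbar.submatrix id (fun k : Fin p × Fin L => (Fin.castSucc k.1, k.2)) * Yprev
    with hMbig
  have hrkM : Mbig.rank = L := by
    rw [← rank_mul_eq_of_orth D.W D.orth, ← hFwd, hF]
  set Mt : Matrix (Fin (p+1) × Fin L) (Fin L) ℂ :=
    Mbig.submatrix (fun k : Fin (p+1) × Fin L => (Fin.castSucc k.1, k.2)) id with hMtdef
  set Mb : Matrix (Fin L) (Fin L) ℂ :=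
    Mbig.submatrix (fun aa : Fin L => (Fin.last (p+1), aa)) id with hMbdef
  have hMsplit : Mbig = liftR (Matrix.fromRows Mt Mb) := rowSplit Mbig
  have hMb0 : Mb = 0 := by
    ext aa cc
    rw [hMbdef, hMbig]
    simp only [Matrix.submatrix_apply, Matrix.sub_apply, id, Matrix.zero_apply]
    have h1 : (EL (p+2) L * D.S0) (Fin.last (p+1), aa) cc = 0 := by
      rw [hEL2, liftR_apply_last]
      simp
    have h2 : (D.Hbar.submatrix id (fun k : Fin p × Fin L => (Fin.castSucc k.1, k.2)) * Yprev)
        (Fin.last (p+1), aa) cc = 0 := by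
      rw [Matrix.mul_apply]
      apply Finset.sum_eq_zero
      intro k _
      have hz : D.Hbar (Fin.last (p+1), aa) (Fin.castSucc k.1, k.2) = 0 := by
        apply D.hess
        have := k.1.isLt
        simp only [Fin.coe_castSucc, Fin.val_last]
        omega
      rw [Matrix.submatrix_apply, id_eq, hz, zero_mul]
    rw [h1, h2, sub_zero]
  have hMtEq : Mt = EL (p+1) L * D.S0 - D.Hprev * Yprev := by
    ext k cc
    obtain ⟨k1, k2⟩ := k
    rw [hMtdef, hMbig]
    simp only [Matrix.submatrix_apply, Matrix.sub_apply, id]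
    have e1 : (EL (p+2) L * D.S0) (Fin.castSucc k1, k2) cc
        = (EL (p+1) L * D.S0) (k1, k2) cc := by
      rw [hEL2, liftR_apply_castSucc]
      simp
    have e2 : (D.Hbar.submatrix id (fun k : Fin p × Fin L => (Fin.castSucc k.1, k.2)) * Yprev)
        (Fin.castSucc k1, k2) cc = (D.Hprev * Yprev) (k1, k2) cc := by
      rw [Matrix.mul_apply, Matrix.mul_apply]
      refine Finset.sum_congr rfl ?_
      rintro ⟨a, b⟩ -
      rfl
    rw [e1, e2]
  have hrkMt : (EL (p+1) L * D.S0 - D.Hprev * Yprev).rank = L := by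
    rw [← hMtEq]
    rw [hMsplit, hMb0, liftR_rank, rank_fromRows_zero] at hrkM
    exact hrkM
  have hQM : S.Qbar * (EL (p+1) L * D.S0 - D.Hprev * Yprev)
      = liftR (Matrix.fromRows 0 S.Ct) := by
    rw [Matrix.mul_sub, ← hT0, hT0split, ← Matrix.mul_assoc,
      show S.Qbar * D.Hprev = stackZero S.R from S.qr_prev, stackZero_rep, liftR_mul,
      Matrix.fromRows_mul, Matrix.zero_mul, hYpRel', liftR_sub, fromRows_sub, sub_self,
      sub_zero]
  have hrkCt : S.Ct.rank = L := by
    have h1 : (S.Qbar * (EL (p+1) L * D.S0 - D.Hprev * Yprev)).rank = L := by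
      rw [Matrix.rank_mul_eq_right_of_isUnit_det _ _ hQbarDet]
      exact hrkMt
    rw [hQM, liftR_rank, rank_zero_fromRows] at h1
    exact h1
  have hCtdet : IsUnit S.Ct.det := by
    rw [← Matrix.isUnit_iff_isUnit_det]
    exact isUnit_of_rank_eq_card _ (by rw [hrkCt, Fintype.card_fin])
  -- stagnation machinery
  have hWorth : D.Wfullᴴ * D.Wfull = 1 := by
    ext k k'
    have h := congrFun (congrFun D.orth (Prod.map Fin.castSucc id k)) (Prod.map Fin.castSucc id k')
    simp only [Matrix.mul_apply, Matrix.conjTranspose_apply, Matrix.one_apply,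
      BlockArnoldi.Wfull, Matrix.submatrix_apply, id] at h ⊢
    rcases eq_or_ne k k' with rfl | hne
    · rw [if_pos rfl]
      rw [if_pos rfl] at h
      exact h
    · have hne2 : Prod.map Fin.castSucc id k ≠ Prod.map Fin.castSucc id k' := by
        obtain ⟨a, b⟩ := k
        obtain ⟨a', b'⟩ := k'
        intro hh
        apply hne
        rw [Prod.mk.injEq] at hh ⊢
        exact ⟨Fin.castSucc_inj.mp hh.1, hh.2⟩
      rw [if_neg hne]
      rw [if_neg hne2] at h
      exact h
  have hWcancel : ∀ Ya Yb' : Matrix (Fin (p+1) × Fin L) (Fin L) ℂ,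
      D.Wfull * Ya = D.Wfull * Yb' → Ya = Yb' := by
    intro Ya Yb' h
    have h2 := congrArg (fun X => D.Wfullᴴ * X) h
    simpa [← Matrix.mul_assoc, hWorth, Matrix.one_mul] using h2
  have hsplitW : D.Wfull.submatrix id (esp p L) = Matrix.fromCols D.Wprev D.Vj := by
    ext r k
    rcases k with k | aa
    · obtain ⟨k1, k2⟩ := k
      rfl
    · rfl
  have hWpY : D.Wprev * Yprev = D.Wfull * liftR (Matrix.fromRows Yprev 0) := by
    rw [mul_liftR, hsplitW, Matrix.fromCols_mul_fromRows, Matrix.mul_zero, add_zero]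
  -- final assembly
  have hkeyB := keyB S.Q11 S.Q12 S.Q21 S.Q22 S.N S.Hhat S.Hsub S.N_inv eT eB u11 u12
  constructor
  · rintro ⟨hnu, hrk⟩
    have hH0 : S.Hhat = 0 := hAiff.mp ⟨hnu, hrk⟩
    have hQ110 : S.Q11 = 0 := hkeyB.mp hH0
    have hYb0 : Yb = 0 := by
      rw [hQ110, Matrix.zero_mul] at hE2
      have h2 := congrArg (fun X => S.N⁻¹ * X) hE2
      simpa [← Matrix.mul_assoc, Matrix.nonsing_inv_mul _ hNdet] using h2
    have hYtEq : Yt = Yprev := by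
      rw [hYb0, Matrix.mul_zero, add_zero, ← hYpRel'] at hE1
      have h2 := congrArg (fun X => S.R⁻¹ * X) hE1
      simpa [← Matrix.mul_assoc, Matrix.nonsing_inv_mul _ hRdet] using h2
    rw [hYjsplit, hYtEq, hYb0, ← hWpY]
  · intro hst
    have hWW : D.Wfull * Yj = D.Wfull * liftR (Matrix.fromRows Yprev 0) := by
      rw [← hWpY]
      exact add_left_cancel hst
    have hYj2 : Yj = liftR (Matrix.fromRows Yprev 0) := hWcancel _ _ hWW
    have hcomp := Matrix.fromRows_inj (liftR_inj (hYjsplit.symm.trans hYj2))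
    have hYb0 : Yb = 0 := hcomp.2
    have hQC0 : S.Q11 * S.Ct = 0 := by
      rw [← hE2, hYb0, Matrix.mul_zero]
    have hQ110 : S.Q11 = 0 := by
      have h2 := congrArg (fun X => X * S.Ct⁻¹) hQC0
      simpa [Matrix.mul_assoc, Matrix.mul_nonsing_inv _ hCtdet] using h2
    exact hAiff.mpr (hkeyB.mpr hQ110)

end
end

section
/- Assume the block setup and QR setup. Decompose the j-th block GMRES update S_j^{(G)} = X_j^{(G)} − X_{j−1}^{(G)} as S_j^{(G)} = S_{j,1} + S_{j,2}, where S_{j,1} = W_{j−1} W_{j−1}ᴴ S_j^{(G)} (its columns lie in 𝕂_{j−1}(A,F₀)) and S_{j,2} = V_j V_jᴴ S_j^{(G)} (its columns lie in the column space of V_j). Then the matrix 𝔑_j := −W_{j−1} R_{j−1}^{−1} Z_j V_jᴴ ∈ ℂ^{n×n} satisfies 𝔑_j² = 0, its column space is contained in 𝕂_{j−1}(A,F₀), it annihilates the orthogonal complement of the column space of V_j, and S_{j,1} = 𝔑_j S_{j,2}. -/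
open Matrix

noncomputable section

set_option maxHeartbeats 1000000

section Stmt12Aux

lemma frobSq0 {a b : Type*} [Fintype a] [Fintype b] (M : Matrix a b ℂ) :
    frobSq M = ∑ c, ((Mᴴ * M) c c).re := by
  rw [frobSq, Finset.sum_comm]
  refine Finset.sum_congr rfl fun c _ => ?_
  rw [mul_apply, Complex.re_sum]
  refine Finset.sum_congr rfl fun r _ => ?_
  simp [conjTranspose_apply, ← Complex.normSq_eq_conj_mul_self]

lemma frobSq_unitary {a b : Type*} [Fintype a] [Fintype b] [DecidableEq a]
    (U : Matrix a a ℂ) (hU : Uᴴ * U = 1) (M : Matrix a b ℂ) :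
    frobSq (U * M) = frobSq M := by
  rw [frobSq0, frobSq0]
  congr 1
  rw [conjTranspose_mul, Matrix.mul_assoc, ← Matrix.mul_assoc Uᴴ, hU, Matrix.one_mul]

lemma frobSq_le {a b : Type*} [Fintype a] [Fintype b] (M1 M2 : Matrix a b ℂ)
    (h : ∀ r c, M1 r c = M2 r c ∨ M1 r c = 0) : frobSq M1 ≤ frobSq M2 := by
  refine Finset.sum_le_sum fun r _ => Finset.sum_le_sum fun c _ => ?_
  rcases h r c with h | h
  · rw [h]
  · rw [h]; simpa using Complex.normSq_nonneg _

lemma one_submatrix_mul9 {m c' m' : Type*} [Fintype m] [DecidableEq m] [Fintype c'] [Fintype m']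
    (e : m' → m) (Y : Matrix m c' ℂ) :
    (1 : Matrix m m ℂ).submatrix e id * Y = Y.submatrix e id := by
  ext a c
  simp [mul_apply, one_apply]

lemma sub_orth {n : ℕ} {ix i1 i2 : Type*} [Fintype ix] [DecidableEq ix] [Fintype i1] [Fintype i2]
    (W : Matrix (Fin n) ix ℂ) (hW : Wᴴ * W = 1) (f : i1 → ix) (g : i2 → ix) :
    (W.submatrix id f)ᴴ * (W.submatrix id g) = Matrix.of fun a b => if f a = g b then (1:ℂ) else 0 := by
  ext a b
  have h : ((Wᴴ * W)) (f a) (g b) = if f a = g b then (1:ℂ) else 0 := by rw [hW, one_apply]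
  rw [Matrix.of_apply, ← h, mul_apply, mul_apply]
  simp

def splitEnd (m L : ℕ) : (Fin (m+1) × Fin L) ≃ ((Fin m × Fin L) ⊕ Fin L) where
  toFun r := if h : (r.1 : ℕ) < m then Sum.inl (⟨r.1, h⟩, r.2) else Sum.inr r.2
  invFun s := Sum.elim (fun k => (k.1.castSucc, k.2)) (fun a => (Fin.last m, a)) s
  left_inv r := by
    rcases r with ⟨r1, r2⟩
    by_cases h : (r1 : ℕ) < m
    · simp only [dif_pos h, Sum.elim_inl]
      exact Prod.ext (Fin.ext rfl) rfl
    · simp only [dif_neg h, Sum.elim_inr]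
      refine Prod.ext (Fin.ext ?_) rfl
      have := r1.is_lt; simp [Fin.last]; omega
  right_inv s := by
    rcases s with ⟨k1, k2⟩ | a
    · simp only [Sum.elim_inl]
      refine (dif_pos (by simpa using k1.is_lt)).trans ?_
      congr 1 <;> simp
    · simp only [Sum.elim_inr]
      exact dif_neg (by simp)

lemma extendOne_eq {m L : ℕ} (Q : Matrix (Fin m × Fin L) (Fin m × Fin L) ℂ) :
    extendOne Q = (fromBlocks Q 0 0 (1 : Matrix (Fin L) (Fin L) ℂ)).submatrix
      (splitEnd m L) (splitEnd m L) := by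
  ext ⟨r1, r2⟩ ⟨c1, c2⟩
  by_cases hr : (r1 : ℕ) < m <;> by_cases hc : (c1 : ℕ) < m <;>
    simp [extendOne, splitEnd, hr, hc, one_apply]

lemma extendOne_unitary {m L : ℕ} (Q : Matrix (Fin m × Fin L) (Fin m × Fin L) ℂ)
    (hQ : Qᴴ * Q = 1) : (extendOne Q)ᴴ * extendOne Q = 1 := by
  rw [extendOne_eq, conjTranspose_submatrix, Matrix.submatrix_mul_equiv]
  simp only [fromBlocks_conjTranspose, fromBlocks_multiply, hQ]
  norm_num

end Stmt12Aux
section Stmt12Aux2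

lemma EL_mul_apply {m L : ℕ} (S0 : Matrix (Fin L) (Fin L) ℂ) (k : Fin m × Fin L) (c : Fin L) :
    (EL m L * S0) k c = if (k.1 : ℕ) = 0 then S0 k.2 c else 0 := by
  rw [mul_apply]
  by_cases h : (k.1 : ℕ) = 0 <;> simp [EL, h]

lemma stackZero_mul_apply {p L : ℕ} (R : Matrix (Fin p × Fin L) (Fin p × Fin L) ℂ)
    (Y : Matrix (Fin p × Fin L) (Fin L) ℂ) (r : Fin (p+1) × Fin L) (c : Fin L) :
    (stackZero R * Y) r c = if h : (r.1 : ℕ) < p then (R * Y) (⟨r.1, h⟩, r.2) c else 0 := by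
  by_cases h : (r.1 : ℕ) < p <;> simp [stackZero, mul_apply, h]

lemma threeBlock_mul_apply {p L : ℕ} (R : Matrix (Fin p × Fin L) (Fin p × Fin L) ℂ)
    (Z : Matrix (Fin p × Fin L) (Fin L) ℂ) (N N2 : Matrix (Fin L) (Fin L) ℂ)
    (Y : Matrix (Fin (p+1) × Fin L) (Fin L) ℂ) (r : Fin (p+2) × Fin L) (c : Fin L) :
    (threeBlock R Z N N2 * Y) r c =
      if hr : (r.1 : ℕ) < p then
        (R * Y.submatrix (Prod.map Fin.castSucc id) id
          + Z * Y.submatrix (fun a : Fin L => (Fin.last p, a)) id) (⟨r.1, hr⟩, r.2) c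
      else if (r.1 : ℕ) = p then
        (N * Y.submatrix (fun a : Fin L => (Fin.last p, a)) id) r.2 c
      else (N2 * Y.submatrix (fun a : Fin L => (Fin.last p, a)) id) r.2 c := by
  rw [mul_apply, Fintype.sum_prod_type, Fin.sum_univ_castSucc]
  by_cases hr : (r.1 : ℕ) < p
  · rw [dif_pos hr, Matrix.add_apply, mul_apply, mul_apply, Fintype.sum_prod_type]
    congr 1
    · refine Finset.sum_congr rfl fun i _ => Finset.sum_congr rfl fun a _ => ?_
      congr 1
      have h1 : ((i.castSucc : Fin (p+1)) : ℕ) < p := by simpa using i.is_lt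
      simp only [threeBlock, Matrix.of_apply, dif_pos hr, dif_pos h1]
      exact congrArg (fun t : Fin p => R (⟨(r.1:ℕ), hr⟩, r.2) (t, a)) (Fin.ext (by simp))
    · refine Finset.sum_congr rfl fun a _ => ?_
      congr 1
      have h1 : ¬ ((Fin.last p : Fin (p+1)) : ℕ) < p := by simp
      simp only [threeBlock, Matrix.of_apply, dif_pos hr, dif_neg h1]
  · have h0 : ∀ (i : Fin p) (a : Fin L), threeBlock R Z N N2 r (i.castSucc, a) = 0 := by
      intro i a
      have h1 : ((i.castSucc : Fin (p+1)) : ℕ) < p := by simpa using i.is_lt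
      simp [threeBlock, hr, h1]
    simp only [h0, zero_mul, Finset.sum_const_zero, add_zero, dif_neg hr, zero_add]
    have h1 : ¬ ((Fin.last p : Fin (p+1)) : ℕ) < p := by simp
    by_cases hp : (r.1 : ℕ) = p
    · rw [if_pos hp, mul_apply]
      refine Finset.sum_congr rfl fun a _ => ?_
      simp [threeBlock, hr, h1, hp]
    · rw [if_neg hp, mul_apply]
      refine Finset.sum_congr rfl fun a _ => ?_
      simp [threeBlock, hr, h1, hp]

end Stmt12Aux2
section Stmt12Aux3

variable {n L p : ℕ}

/-- `G = Q_j Q̄_{j-1,ext} E_L S₀` -/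
def bigG (D : BlockArnoldi n L p) (S : QRSetup L p D.Hbar D.S0) :
    Matrix (Fin (p+2) × Fin L) (Fin L) ℂ :=
  trailingTwo (m := p) S.Q11 S.Q12 S.Q21 S.Q22 * (extendOne S.Qbar * (EL (p+2) L * D.S0))

def GtopM (D : BlockArnoldi n L p) (S : QRSetup L p D.Hbar D.S0) :
    Matrix (Fin p × Fin L) (Fin L) ℂ :=
  Matrix.of fun k c => bigG D S (k.1.castSucc.castSucc, k.2) c

def GmidM (D : BlockArnoldi n L p) (S : QRSetup L p D.Hbar D.S0) :
    Matrix (Fin L) (Fin L) ℂ :=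
  Matrix.of fun a c => bigG D S ((Fin.last p).castSucc, a) c

lemma gmres_prev_eq (D : BlockArnoldi n L p) (S : QRSetup L p D.Hbar D.S0)
    (Yprev : Matrix (Fin p × Fin L) (Fin L) ℂ) (hYprev : IsBlockGMRESprev D Yprev) :
    Yprev = S.R⁻¹ * (Matrix.of fun (k : Fin p × Fin L) c =>
      (S.Qbar * (EL (p+1) L * D.S0)) (k.1.castSucc, k.2) c) := by
  set T := EL (p+1) L * D.S0 with hT
  set G := S.Qbar * T with hG
  set Gt : Matrix (Fin p × Fin L) (Fin L) ℂ :=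
    Matrix.of fun k c => G (k.1.castSucc, k.2) c with hGt
  have hRinv : S.R * S.R⁻¹ = 1 :=
    Matrix.mul_nonsing_inv _ ((Matrix.isUnit_iff_isUnit_det _).mp S.R_inv)
  have hfr : ∀ Y : Matrix (Fin p × Fin L) (Fin L) ℂ, frobSq (D.Hprev * Y - T) = frobSq (stackZero S.R * Y - G) := by
    intro Y
    rw [← frobSq_unitary S.Qbar S.Qbar_unit (D.Hprev * Y - T)]
    congr 1
    rw [Matrix.mul_sub, ← Matrix.mul_assoc, ← hG]
    have h2 : S.Qbar * D.Hprev = stackZero S.R := S.qr_prev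
    rw [h2]
  have hmin : ∀ Y'' : Matrix (Fin p × Fin L) (Fin L) ℂ, frobSq (D.Hprev * (S.R⁻¹ * Gt) - T) ≤ frobSq (D.Hprev * Y'' - T) := by
    intro Y''
    rw [hfr, hfr]
    apply frobSq_le
    rintro ⟨r1, r2⟩ c
    rw [Matrix.sub_apply, Matrix.sub_apply, stackZero_mul_apply, stackZero_mul_apply]
    by_cases hr : (r1 : ℕ) < p
    · right
      rw [dif_pos hr, ← Matrix.mul_assoc, hRinv, Matrix.one_mul, sub_eq_zero]
      show G ((⟨(r1:ℕ), hr⟩ : Fin p).castSucc, r2) c = G (r1, r2) c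
      exact congrArg (fun t => G (t, r2) c) (Fin.ext rfl)
    · left; rw [dif_neg hr, dif_neg hr]
  exact (hYprev.2 _ hmin).symm

lemma gmres_j_eq (D : BlockArnoldi n L p) (S : QRSetup L p D.Hbar D.S0)
    (Yj : Matrix (Fin (p+1) × Fin L) (Fin L) ℂ) (hYj : IsBlockGMRESj D Yj) :
    Yj = Matrix.of (fun (k : Fin (p+1) × Fin L) (c : Fin L) =>
      if h : (k.1 : ℕ) < p then
        (S.R⁻¹ * (GtopM D S - S.Z * (S.N⁻¹ * GmidM D S))) (⟨k.1, h⟩, k.2) c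
      else (S.N⁻¹ * GmidM D S) k.2 c) := by
  set T := EL (p+2) L * D.S0 with hTdef
  set TT := trailingTwo (m := p) S.Q11 S.Q12 S.Q21 S.Q22 with hTT
  set EO := extendOne S.Qbar with hEO
  set U := TT * EO with hUdef
  set M := threeBlock S.R S.Z S.N 0 with hM
  have hU : Uᴴ * U = 1 := by
    rw [hUdef, conjTranspose_mul, Matrix.mul_assoc, ← Matrix.mul_assoc TTᴴ, S.Qj_unit,
      Matrix.one_mul, extendOne_unitary _ S.Qbar_unit]
  have hUH : U * D.Hbar = M := by rw [hUdef, Matrix.mul_assoc]; exact S.qr_full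
  have hGdef : bigG D S = U * T := by rw [bigG, hUdef, Matrix.mul_assoc]
  have hRinv : S.R * S.R⁻¹ = 1 :=
    Matrix.mul_nonsing_inv _ ((Matrix.isUnit_iff_isUnit_det _).mp S.R_inv)
  have hNinv : S.N * S.N⁻¹ = 1 :=
    Matrix.mul_nonsing_inv _ ((Matrix.isUnit_iff_isUnit_det _).mp S.N_inv)
  set Yb := S.N⁻¹ * GmidM D S with hYb
  set Yt := S.R⁻¹ * (GtopM D S - S.Z * Yb) with hYt
  set Yopt : Matrix (Fin (p+1) × Fin L) (Fin L) ℂ := Matrix.of (fun k c =>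
      if h : (k.1 : ℕ) < p then Yt (⟨k.1, h⟩, k.2) c else Yb k.2 c) with hYopt
  have hfr : ∀ Y : Matrix (Fin (p+1) × Fin L) (Fin L) ℂ, frobSq (D.Hbar * Y - T) = frobSq (M * Y - bigG D S) := by
    intro Y
    rw [← frobSq_unitary U hU (D.Hbar * Y - T)]
    congr 1
    rw [Matrix.mul_sub, ← Matrix.mul_assoc, hUH, hGdef]
  have htop : Yopt.submatrix (Prod.map Fin.castSucc id) id = Yt := by
    ext ⟨i, a⟩ c
    have h1 : ((i.castSucc : Fin (p+1)) : ℕ) < p := by simpa using i.is_lt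
    show Yopt (i.castSucc, a) c = Yt (i, a) c
    rw [hYopt]
    simp only [Matrix.of_apply, dif_pos h1]
    exact congrArg (fun t : Fin p => Yt (t, a) c) (Fin.ext (by simp))
  have hbot : Yopt.submatrix (fun a : Fin L => (Fin.last p, a)) id = Yb := by
    ext a c
    show Yopt (Fin.last p, a) c = Yb a c
    rw [hYopt]
    simp only [Matrix.of_apply, dif_neg (by simp : ¬ ((Fin.last p : Fin (p+1)) : ℕ) < p)]
  have hMopt : ∀ r c, (M * Yopt) r c = if (r.1 : ℕ) < p + 1 then bigG D S r c else 0 := by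
    rintro ⟨r1, r2⟩ c
    dsimp only
    rw [hM, threeBlock_mul_apply, htop, hbot]
    dsimp only
    by_cases hr : (r1 : ℕ) < p
    · rw [dif_pos hr, if_pos (by omega), hYt, ← Matrix.mul_assoc, hRinv, Matrix.one_mul,
        sub_add_cancel]
      show GtopM D S ((⟨(r1:ℕ), hr⟩ : Fin p), r2) c = _
      rw [GtopM]
      simp only [Matrix.of_apply]
      have he : ((⟨(r1:ℕ), hr⟩ : Fin p).castSucc.castSucc : Fin (p+2)) = r1 := Fin.ext (by simp)
      exact congrArg (fun t : Fin (p+2) => bigG D S (t, r2) c) he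
    · rw [dif_neg hr]
      by_cases hp : (r1 : ℕ) = p
      · rw [if_pos hp, if_pos (by omega), hYb, ← Matrix.mul_assoc, hNinv, Matrix.one_mul]
        show GmidM D S r2 c = _
        rw [GmidM]
        simp only [Matrix.of_apply]
        have he : (((Fin.last p).castSucc : Fin (p+2))) = r1 := Fin.ext (by simpa using hp.symm)
        exact congrArg (fun t : Fin (p+2) => bigG D S (t, r2) c) he
      · rw [if_neg hp, if_neg (by omega), Matrix.zero_mul, Matrix.zero_apply]
  have hmin : ∀ Y'' : Matrix (Fin (p+1) × Fin L) (Fin L) ℂ, frobSq (D.Hbar * Yopt - T) ≤ frobSq (D.Hbar * Y'' - T) := by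
    intro Y''
    rw [hfr, hfr]
    apply frobSq_le
    rintro ⟨r1, r2⟩ c
    rw [Matrix.sub_apply, Matrix.sub_apply, hMopt]
    dsimp only
    by_cases hr : (r1 : ℕ) < p + 1
    · right; rw [if_pos hr, sub_self]
    · left
      rw [if_neg hr, hM, threeBlock_mul_apply, dif_neg (show ¬ ((r1:ℕ) < p) by omega),
        if_neg (show ¬ ((r1:ℕ) = p) by omega), Matrix.zero_mul, Matrix.zero_apply]
  exact (hYj.2 _ hmin).symm

end Stmt12Aux3
section Stmt12Aux4

variable {n L p : ℕ}

lemma bigG_low (D : BlockArnoldi n L p) (S : QRSetup L p D.Hbar D.S0)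
    (r : Fin (p+2) × Fin L) (c : Fin L) (hr : (r.1 : ℕ) < p) :
    bigG D S r c = (extendOne S.Qbar * (EL (p+2) L * D.S0)) r c := by
  rw [bigG, mul_apply]
  have hTT : ∀ k, trailingTwo (m := p) S.Q11 S.Q12 S.Q21 S.Q22 r k =
      if r = k then 1 else 0 := by
    intro k
    simp [trailingTwo, Or.inl hr]
  simp [hTT]

lemma EO_low (D : BlockArnoldi n L p) (S : QRSetup L p D.Hbar D.S0)
    (i : Fin (p+1)) (a : Fin L) (c : Fin L) :
    (extendOne S.Qbar * (EL (p+2) L * D.S0)) (i.castSucc, a) c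
      = (S.Qbar * (EL (p+1) L * D.S0)) (i, a) c := by
  rw [mul_apply, mul_apply, Fintype.sum_prod_type, Fin.sum_univ_castSucc, Fintype.sum_prod_type]
  have hlast : ∀ b : Fin L, (EL (p+2) L * D.S0) (Fin.last (p+1), b) c = 0 := by
    intro b
    rw [EL_mul_apply]
    simp [Fin.last]
  simp only [hlast, mul_zero, Finset.sum_const_zero, add_zero]
  refine Finset.sum_congr rfl fun i' _ => Finset.sum_congr rfl fun b _ => ?_
  have h1 : ((i.castSucc : Fin (p+2)) : ℕ) < p + 1 := by simpa using i.is_lt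
  have h2 : ((i'.castSucc : Fin (p+2)) : ℕ) < p + 1 := by simpa using i'.is_lt
  have hQ : extendOne S.Qbar (i.castSucc, a) (i'.castSucc, b) = S.Qbar (i, a) (i', b) := by
    simp only [extendOne, Matrix.of_apply, dif_pos h1, dif_pos h2]
    have e1 : (⟨((i.castSucc : Fin (p+2)) : ℕ), h1⟩ : Fin (p+1)) = i := Fin.ext (by simp)
    have e2 : (⟨((i'.castSucc : Fin (p+2)) : ℕ), h2⟩ : Fin (p+1)) = i' := Fin.ext (by simp)
    rw [e1, e2]
  have hE : (EL (p+2) L * D.S0) (i'.castSucc, b) c = (EL (p+1) L * D.S0) (i', b) c := by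
    rw [EL_mul_apply, EL_mul_apply]
    simp
  rw [hQ, hE]

lemma GtopM_eq (D : BlockArnoldi n L p) (S : QRSetup L p D.Hbar D.S0) :
    GtopM D S = Matrix.of fun (k : Fin p × Fin L) c =>
      (S.Qbar * (EL (p+1) L * D.S0)) (k.1.castSucc, k.2) c := by
  ext ⟨i, a⟩ c
  show bigG D S (i.castSucc.castSucc, a) c = _
  rw [bigG_low D S _ _ (by simpa using i.is_lt), EO_low]
  rfl

lemma minimizer_key (D : BlockArnoldi n L p) (S : QRSetup L p D.Hbar D.S0)
    (Yj : Matrix (Fin (p+1) × Fin L) (Fin L) ℂ) (hYj : IsBlockGMRESj D Yj)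
    (Yprev : Matrix (Fin p × Fin L) (Fin L) ℂ) (hYprev : IsBlockGMRESprev D Yprev) :
    Yj.submatrix (Prod.map Fin.castSucc id) id - Yprev =
      -(S.R⁻¹ * S.Z * Yj.submatrix (fun a : Fin L => (Fin.last p, a)) id) := by
  have hj := gmres_j_eq D S Yj hYj
  have hp := gmres_prev_eq D S Yprev hYprev
  have htop : Yj.submatrix (Prod.map Fin.castSucc id) id
      = S.R⁻¹ * (GtopM D S - S.Z * (S.N⁻¹ * GmidM D S)) := by
    ext ⟨i, a⟩ c
    show Yj (i.castSucc, a) c = _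
    rw [hj]
    have h1 : ((i.castSucc : Fin (p+1)) : ℕ) < p := by simpa using i.is_lt
    simp only [Matrix.of_apply, dif_pos h1]
    exact congrArg (fun t : Fin p =>
      (S.R⁻¹ * (GtopM D S - S.Z * (S.N⁻¹ * GmidM D S))) (t, a) c) (Fin.ext (by simp))
  have hbot : Yj.submatrix (fun a : Fin L => (Fin.last p, a)) id = S.N⁻¹ * GmidM D S := by
    ext a c
    show Yj (Fin.last p, a) c = _
    rw [hj]
    simp only [Matrix.of_apply, dif_neg (by simp : ¬ ((Fin.last p : Fin (p+1)) : ℕ) < p)]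
  rw [htop, hbot, hp, ← GtopM_eq, Matrix.mul_sub, Matrix.mul_assoc S.R⁻¹ S.Z]
  abel

end Stmt12Aux4

/-- Decompose the block GMRES update
`S_j^(G) = X_j^(G) - X_{j-1}^(G)` as `S_{j,1} + S_{j,2}` with
`S_{j,1} = W_{j-1} W_{j-1}ᴴ S_j^(G)` and `S_{j,2} = V_j V_jᴴ S_j^(G)`.  Then
`𝔑_j = -W_{j-1} R_{j-1}⁻¹ Z_j V_jᴴ` is nilpotent (`𝔑_j² = 0`), its column space is
contained in `𝕂_{j-1}(A, F₀)`, it annihilates the orthogonal complement of the column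
space of `V_j`, and `S_{j,1} = 𝔑_j S_{j,2}`. -/
theorem stmt12 {n L p : ℕ} (D : BlockArnoldi n L p) (S : QRSetup L p D.Hbar D.S0)
    (Yj : Matrix (Fin (p+1) × Fin L) (Fin L) ℂ) (hYj : IsBlockGMRESj D Yj)
    (Yprev : Matrix (Fin p × Fin L) (Fin L) ℂ) (hYprev : IsBlockGMRESprev D Yprev) :
    ∀ Sg : Matrix (Fin n) (Fin L) ℂ,
      Sg = (D.X0 + D.Wfull * Yj) - (D.X0 + D.Wprev * Yprev) →
    ∀ Ng : Matrix (Fin n) (Fin n) ℂ,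
      Ng = -(D.Wprev * S.R⁻¹ * S.Z * D.Vjᴴ) →
    Ng * Ng = 0 ∧
    (∀ v : Fin n → ℂ, Ng *ᵥ v ∈ blockKrylov D.A (D.B - D.A * D.X0) p) ∧
    (∀ v : Fin n → ℂ, D.Vjᴴ *ᵥ v = 0 → Ng *ᵥ v = 0) ∧
    D.Wprev * D.Wprevᴴ * Sg = Ng * (D.Vj * D.Vjᴴ * Sg) := by
  intro Sg hSg Ng hNg
  have hVW : D.Vjᴴ * D.Wprev = 0 := by
    rw [BlockArnoldi.Vj, BlockArnoldi.Wprev, sub_orth _ D.orth]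
    ext a ⟨b1, b2⟩
    rw [Matrix.of_apply, Matrix.zero_apply, if_neg]
    intro h
    have hb := b1.is_lt
    simp [Prod.ext_iff, Fin.ext_iff] at h
    omega
  have hVV : D.Vjᴴ * D.Vj = 1 := by
    rw [BlockArnoldi.Vj, sub_orth _ D.orth]
    ext a b
    rw [Matrix.of_apply, Matrix.one_apply]
    by_cases hab : a = b <;> simp [Prod.ext_iff, hab]
  have hWW : D.Wprevᴴ * D.Wprev = 1 := by
    rw [BlockArnoldi.Wprev, sub_orth _ D.orth]
    ext ⟨a1, a2⟩ ⟨b1, b2⟩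
    rw [Matrix.of_apply, Matrix.one_apply]
    have hiff : (Prod.map (fun i : Fin p => (i.castSucc.castSucc : Fin (p+2))) id (a1, a2)
        = Prod.map (fun i : Fin p => (i.castSucc.castSucc : Fin (p+2))) id (b1, b2))
        ↔ ((a1, a2) : Fin p × Fin L) = (b1, b2) := by
      simp [Prod.ext_iff, Fin.ext_iff]
    rw [if_congr hiff rfl rfl]
  have hWfullprev : D.Wprevᴴ * D.Wfull
      = (1 : Matrix (Fin (p+1) × Fin L) (Fin (p+1) × Fin L) ℂ).submatrix
          (Prod.map Fin.castSucc id) id := by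
    rw [BlockArnoldi.Wprev, BlockArnoldi.Wfull, sub_orth _ D.orth]
    ext ⟨a1, a2⟩ ⟨b1, b2⟩
    rw [Matrix.of_apply, Matrix.submatrix_apply, Matrix.one_apply]
    have hiff : (Prod.map (fun i : Fin p => (i.castSucc.castSucc : Fin (p+2))) id (a1, a2)
        = Prod.map Fin.castSucc id (b1, b2))
        ↔ (Prod.map Fin.castSucc id ((a1, a2) : Fin p × Fin L) = id ((b1, b2) : Fin (p+1) × Fin L)) := by
      simp [Prod.ext_iff, Fin.ext_iff]
    rw [if_congr hiff rfl rfl]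
  have hVjWfull : D.Vjᴴ * D.Wfull
      = (1 : Matrix (Fin (p+1) × Fin L) (Fin (p+1) × Fin L) ℂ).submatrix
          (fun a : Fin L => ((Fin.last p : Fin (p+1)), a)) id := by
    rw [BlockArnoldi.Vj, BlockArnoldi.Wfull, sub_orth _ D.orth]
    ext a ⟨b1, b2⟩
    rw [Matrix.of_apply, Matrix.submatrix_apply, Matrix.one_apply]
    have hiff : ((((Fin.last p).castSucc : Fin (p+2)), a) = Prod.map Fin.castSucc id (b1, b2))
        ↔ (((Fin.last p : Fin (p+1)), a) = id ((b1, b2) : Fin (p+1) × Fin L)) := by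
      simp [Prod.ext_iff, Fin.ext_iff]
    rw [if_congr hiff rfl rfl]
  have hSg' : Sg = D.Wfull * Yj - D.Wprev * Yprev := by
    rw [hSg, add_sub_add_left_eq_sub]
  have h1 : D.Wprevᴴ * Sg = Yj.submatrix (Prod.map Fin.castSucc id) id - Yprev := by
    rw [hSg', Matrix.mul_sub, ← Matrix.mul_assoc, ← Matrix.mul_assoc, hWfullprev, hWW,
      Matrix.one_mul, one_submatrix_mul9]
  have h2 : D.Vjᴴ * Sg = Yj.submatrix (fun a : Fin L => (Fin.last p, a)) id := by
    rw [hSg', Matrix.mul_sub, ← Matrix.mul_assoc, ← Matrix.mul_assoc, hVjWfull, hVW,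
      Matrix.zero_mul, sub_zero, one_submatrix_mul9]
  refine ⟨?_, ?_, ?_, ?_⟩
  · rw [hNg, neg_mul_neg]
    rw [show D.Wprev * S.R⁻¹ * S.Z * D.Vjᴴ * (D.Wprev * S.R⁻¹ * S.Z * D.Vjᴴ)
        = D.Wprev * (S.R⁻¹ * (S.Z * ((D.Vjᴴ * D.Wprev) * (S.R⁻¹ * (S.Z * D.Vjᴴ))))) from by
      simp only [Matrix.mul_assoc]]
    rw [hVW, Matrix.zero_mul, Matrix.mul_zero, Matrix.mul_zero, Matrix.mul_zero]
  · intro v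
    rw [hNg, Matrix.neg_mulVec]
    refine neg_mem ?_
    have hmv : (D.Wprev * S.R⁻¹ * S.Z * D.Vjᴴ) *ᵥ v
        = D.Wprev *ᵥ ((S.R⁻¹ * (S.Z * D.Vjᴴ)) *ᵥ v) := by
      rw [Matrix.mulVec_mulVec]
      congr 1
      simp only [Matrix.mul_assoc]
    rw [hmv, D.span p (by omega)]
    set u := (S.R⁻¹ * (S.Z * D.Vjᴴ)) *ᵥ v with hu
    have hsum : D.Wprev *ᵥ u = ∑ k : Fin p × Fin L,
        u k • (fun r => D.W r (k.1.castSucc.castSucc, k.2)) := by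
      funext r
      rw [Finset.sum_apply]
      simp only [Matrix.mulVec, dotProduct, Pi.smul_apply, smul_eq_mul]
      exact Finset.sum_congr rfl fun k _ => mul_comm _ _
    rw [hsum]
    refine Submodule.sum_mem _ fun k _ => Submodule.smul_mem _ _ (Submodule.subset_span ?_)
    exact ⟨(k.1.castSucc.castSucc, k.2), by simpa using k.1.is_lt, rfl⟩
  · intro v hv
    rw [hNg, Matrix.neg_mulVec]
    have hmv : (D.Wprev * S.R⁻¹ * S.Z * D.Vjᴴ) *ᵥ v
        = (D.Wprev * S.R⁻¹ * S.Z) *ᵥ (D.Vjᴴ *ᵥ v) := by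
      rw [Matrix.mulVec_mulVec]
    rw [hmv, hv, Matrix.mulVec_zero, neg_zero]
  · have h4 : ∀ X : Matrix (Fin L) (Fin L) ℂ, D.Vjᴴ * (D.Vj * X) = X := by
      intro X
      rw [← Matrix.mul_assoc, hVV, Matrix.one_mul]
    rw [Matrix.mul_assoc D.Wprev, h1, minimizer_key D S Yj hYj Yprev hYprev, hNg]
    simp only [Matrix.neg_mul, Matrix.mul_neg, Matrix.mul_assoc]
    rw [h4, h2]

end
end
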